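/- arXiv:2503.03577 — 2 statements merged into one kernel-verified Lean document; each statement's English description precedes it below -/
import Mathlib

section
/- Let k ≥ 1 and n ≥ 5 with k ≤ n/2. Every min-saturated convex precolored Θ^k-drawing of a graph G on n vertices has at most (k+4)(n−2)/2 edges, i.e., 2·|E(G)| ≤ (k+4)(n−2). -/
/-- Points of the plane. -/
abbrev Pt : Type := ℝ × ℝ

/-- Two straight-line segments cross if some point lies in the interior
(open segment) of both. -/
def SegCross (a b c d : Pt) : Prop :=
  ∃ x : Pt, x ∈ openSegment ℝ a b ∧ x ∈ openSegment ℝ c d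

/-- Two edges (unordered pairs of vertices) cross in the drawing `p`. -/
def EdgeCross {V : Type} (p : V → Pt) (e f : Sym2 V) : Prop :=
  ∃ u v x y : V, e = s(u, v) ∧ f = s(x, y) ∧ SegCross (p u) (p v) (p x) (p y)

/-- The drawing `p` is injective and no three vertex points are collinear. -/
def GenPos {V : Type} (p : V → Pt) : Prop :=
  Function.Injective p ∧
    ∀ u v w : V, u ≠ v → u ≠ w → v ≠ w → ¬ Collinear ℝ ({p u, p v, p w} : Set Pt)

/-- The vertex points are in convex position: every vertex point is an extreme
point of the convex hull of all vertex points. -/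
def ConvexPos {V : Type} (p : V → Pt) : Prop :=
  ∀ v : V, p v ∈ Set.extremePoints ℝ (convexHull ℝ (Set.range p))

/-- A `k`-coloring of the edges of `G` is crossing-free if no two distinct
edges of the same color cross. -/
def CrossingFree {V : Type} {k : ℕ} (G : SimpleGraph V) (p : V → Pt)
    (φ : Sym2 V → Fin k) : Prop :=
  ∀ e ∈ G.edgeSet, ∀ f ∈ G.edgeSet, e ≠ f → φ e = φ f → ¬ EdgeCross p e f

open scoped Classical

/-- A precolored drawing `(G, p, φ)` is saturated: for every pair of distinct
non-adjacent vertices and every color `c`, assigning color `c` to the new edge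
`uv` yields a coloring that is not crossing-free. -/
def PrecoloredSaturated {V : Type} {k : ℕ} (G : SimpleGraph V) (p : V → Pt)
    (φ : Sym2 V → Fin k) : Prop :=
  ∀ u v : V, u ≠ v → ¬ G.Adj u v → ∀ c : Fin k,
    ¬ CrossingFree (G ⊔ SimpleGraph.fromEdgeSet {s(u, v)}) p
      (fun e => if e = s(u, v) then c else φ e)

/-- A (non-precolored) drawing of `G` is saturated for thickness `k`: for every
pair of distinct non-adjacent vertices `u, v`, the drawing of `G + uv` admits
no crossing-free `k`-coloring. -/
def Saturated {V : Type} (k : ℕ) (G : SimpleGraph V) (p : V → Pt) : Prop :=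
  ∀ u v : V, u ≠ v → ¬ G.Adj u v →
    ∀ φ : Sym2 V → Fin k,
      ¬ CrossingFree (G ⊔ SimpleGraph.fromEdgeSet {s(u, v)}) p φ

/-- Twice the signed area of the triangle `a b c`. -/
def det2 (a b c : Pt) : ℝ :=
  (b.1 - a.1) * (c.2 - a.2) - (b.2 - a.2) * (c.1 - a.1)

/-- An edge is an outer edge if its endpoints are consecutive on the boundary
of the convex hull of the vertex points, i.e. all other vertex points lie
strictly on one side of the line through its endpoints. -/
def IsOuterEdge {V : Type} (p : V → Pt) (e : Sym2 V) : Prop :=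
  ∃ u v : V, e = s(u, v) ∧
    ((∀ w : V, w ≠ u → w ≠ v → 0 < det2 (p u) (p v) (p w)) ∨
     (∀ w : V, w ≠ u → w ≠ v → det2 (p u) (p v) (p w) < 0))


namespace ThetaAux

/-- point on parabola -/
def pv (i : ℕ) : Pt := ((i : ℝ), (i : ℝ) ^ 2)

lemma det2_pv (a b c : ℕ) :
    det2 (pv a) (pv b) (pv c) = ((b:ℝ) - a) * ((c:ℝ) - a) * ((c:ℝ) - b) := by
  simp only [det2, pv]; ring

lemma det2_pv_pos {a b c : ℕ} (h : a < b ∧ b < c ∨ b < c ∧ c < a ∨ c < a ∧ a < b) :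
    0 < det2 (pv a) (pv b) (pv c) := by
  rw [det2_pv]
  rcases h with ⟨h1, h2⟩ | ⟨h1, h2⟩ | ⟨h1, h2⟩
  · have e1 : (a:ℝ) < b := by exact_mod_cast h1
    have e2 : (b:ℝ) < c := by exact_mod_cast h2
    have p1 : (0:ℝ) < b - a := by linarith
    have p2 : (0:ℝ) < c - a := by linarith
    have p3 : (0:ℝ) < c - b := by linarith
    positivity
  · have e1 : (b:ℝ) < c := by exact_mod_cast h1
    have e2 : (c:ℝ) < a := by exact_mod_cast h2
    nlinarith [mul_pos (show (0:ℝ) < a - b by linarith) (show (0:ℝ) < a - c by linarith),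
      show (0:ℝ) < c - b by linarith]
  · have e1 : (c:ℝ) < a := by exact_mod_cast h1
    have e2 : (a:ℝ) < b := by exact_mod_cast h2
    nlinarith [mul_pos (show (0:ℝ) < a - c by linarith) (show (0:ℝ) < b - c by linarith),
      show (0:ℝ) < b - a by linarith]

lemma det2_pv_ne {a b c : ℕ} (h1 : a ≠ b) (h2 : a ≠ c) (h3 : b ≠ c) :
    det2 (pv a) (pv b) (pv c) ≠ 0 := by
  rw [det2_pv]
  have e1 : (b:ℝ) - a ≠ 0 := sub_ne_zero.2 (by exact_mod_cast h1.symm)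
  have e2 : (c:ℝ) - a ≠ 0 := sub_ne_zero.2 (by exact_mod_cast h2.symm)
  have e3 : (c:ℝ) - b ≠ 0 := sub_ne_zero.2 (by exact_mod_cast h3.symm)
  exact mul_ne_zero (mul_ne_zero e1 e2) e3

/-- membership in open segment gives coefficients -/
lemma openSegment_coords {x a b : Pt} (h : x ∈ openSegment ℝ a b) :
    ∃ t : ℝ, 0 < t ∧ t < 1 ∧ x.1 = (1 - t) * a.1 + t * b.1 ∧ x.2 = (1 - t) * a.2 + t * b.2 := by
  obtain ⟨u, v, hu, hv, huv, hx⟩ := h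
  have hu1 : u = 1 - v := by linarith
  refine ⟨v, hv, by linarith, ?_, ?_⟩
  · rw [← hx, hu1]
    simp [Prod.fst_add, Prod.smul_fst, smul_eq_mul]
  · rw [← hx, hu1]
    simp [Prod.snd_add, Prod.smul_snd, smul_eq_mul]

lemma det2_on_seg {x a b c d : Pt} (h : x ∈ openSegment ℝ c d) :
    ∃ t : ℝ, 0 < t ∧ t < 1 ∧ det2 a b x = (1 - t) * det2 a b c + t * det2 a b d := by
  obtain ⟨t, h0, h1, hx1, hx2⟩ := openSegment_coords h
  exact ⟨t, h0, h1, by simp only [det2, hx1, hx2]; ring⟩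

lemma det2_self_seg {x a b : Pt} (h : x ∈ openSegment ℝ a b) : det2 a b x = 0 := by
  obtain ⟨t, _, _, hx1, hx2⟩ := openSegment_coords h
  simp only [det2, hx1, hx2]; ring

/-- same strict side: no crossing -/
lemma noCross_sameSide {a b c d : Pt} (h : 0 < det2 c d a * det2 c d b) :
    ¬ SegCross a b c d := by
  rintro ⟨x, hx1, hx2⟩
  have h0 : det2 c d x = 0 := det2_self_seg hx2
  obtain ⟨t, ht0, ht1, he⟩ := det2_on_seg (a := c) (b := d) hx1
  rcases mul_pos_iff.1 h with ⟨p1, p2⟩ | ⟨p1, p2⟩ <;> nlinarith [he, h0]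

/-- shared endpoint: no crossing -/
lemma noCross_shared {a b d : Pt} (h : det2 a b d ≠ 0) : ¬ SegCross a b a d := by
  rintro ⟨x, hx1, hx2⟩
  have h0 : det2 a b x = 0 := det2_self_seg hx1
  obtain ⟨t, ht0, ht1, he⟩ := det2_on_seg (a := a) (b := b) hx2
  have : det2 a b a = 0 := by simp [det2]
  rw [this] at he
  have : det2 a b d = 0 := by
    have ht : t * det2 a b d = 0 := by linarith [he, h0]
    rcases mul_eq_zero.1 ht with h' | h'
    · exact absurd h' (ne_of_gt ht0)
    · exact h'
  exact h this

lemma segCross_swap_left {a b c d : Pt} (h : SegCross a b c d) : SegCross b a c d := by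
  obtain ⟨x, h1, h2⟩ := h; exact ⟨x, by rwa [openSegment_symm], h2⟩

lemma segCross_swap_right {a b c d : Pt} (h : SegCross a b c d) : SegCross a b d c := by
  obtain ⟨x, h1, h2⟩ := h; exact ⟨x, h1, by rwa [openSegment_symm]⟩

lemma segCross_swap_pairs {a b c d : Pt} (h : SegCross a b c d) : SegCross c d a b := by
  obtain ⟨x, h1, h2⟩ := h; exact ⟨x, h2, h1⟩

/-- the crossing existence lemma -/
lemma cross_of_dets {a b c d : Pt} (h1 : det2 a b c < 0) (h2 : 0 < det2 a b d)
    (h3 : 0 < det2 c d a) (h4 : det2 c d b < 0) : SegCross a b c d := by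
  set DA := det2 c d a with hDA
  set DB := det2 c d b with hDB
  set EC := det2 a b c with hEC
  set ED := det2 a b d with hED
  have hdelta : DA - DB = ED - EC := by simp only [hDA, hDB, hEC, hED, det2]; ring
  have hD : 0 < DA - DB := by linarith
  have hDne : DA - DB ≠ 0 := ne_of_gt hD
  set s : ℝ := DA / (DA - DB) with hs
  have hs0 : 0 < s := div_pos h3 hD
  have hs1 : s < 1 := by
    rw [hs, div_lt_one hD]; linarith
  set t : ℝ := -EC / (DA - DB) with ht
  have ht0 : 0 < t := div_pos (by linarith) hD
  have ht1 : t < 1 := by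
    rw [ht, div_lt_one hD]; linarith
  set x : Pt := (1 - s) • a + s • b with hx
  refine ⟨x, ⟨1 - s, s, by linarith, hs0, by ring, rfl⟩, ⟨1 - t, t, by linarith, ht0, by ring, ?_⟩⟩
  have key1 : DA * b.1 - DB * a.1 = ED * c.1 - EC * d.1 := by
    simp only [hDA, hDB, hEC, hED, det2]; ring
  have key2 : DA * b.2 - DB * a.2 = ED * c.2 - EC * d.2 := by
    simp only [hDA, hDB, hEC, hED, det2]; ring
  have hxc : x = ((1 - s) * a.1 + s * b.1, (1 - s) * a.2 + s * b.2) := by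
    simp [hx, Prod.ext_iff, Prod.fst_add, Prod.snd_add, Prod.smul_fst, Prod.smul_snd, smul_eq_mul]
  have et : (DA - DB) * t = -EC := by rw [ht]; field_simp
  have es : (DA - DB) * s = DA := by rw [hs]; field_simp
  have goal1 : (1 - t) * c.1 + t * d.1 = (1 - s) * a.1 + s * b.1 := by
    apply mul_left_cancel₀ hDne
    linear_combination (-1 : ℝ) * key1 + c.1 * hdelta + (d.1 - c.1) * et + (a.1 - b.1) * es
  have goal2 : (1 - t) * c.2 + t * d.2 = (1 - s) * a.2 + s * b.2 := by
    apply mul_left_cancel₀ hDne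
    linear_combination (-1 : ℝ) * key2 + c.2 * hdelta + (d.2 - c.2) * et + (a.2 - b.2) * es
  have : ((1-t) • c + t • d : Pt) = ((1 - t) * c.1 + t * d.1, (1 - t) * c.2 + t * d.2) := by
    simp [Prod.ext_iff, Prod.fst_add, Prod.snd_add, Prod.smul_fst, Prod.smul_snd, smul_eq_mul]
  rw [this, hxc, goal1, goal2]

end ThetaAux

namespace ThetaAux

/-- interleaved sorted quadruple gives a crossing -/
lemma segCross_of_interleave {a c b d : ℕ} (h1 : a < c) (h2 : c < b) (h3 : b < d) :
    SegCross (pv a) (pv b) (pv c) (pv d) := by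
  apply cross_of_dets
  · have : 0 < det2 (pv a) (pv c) (pv b) := det2_pv_pos (Or.inl ⟨h1, h2⟩)
    have e : det2 (pv a) (pv b) (pv c) = -det2 (pv a) (pv c) (pv b) := by
      simp only [det2]; ring
    rw [e]; linarith
  · exact det2_pv_pos (Or.inl ⟨lt_trans h1 h2, h3⟩)
  · have : 0 < det2 (pv a) (pv c) (pv d) := det2_pv_pos (Or.inl ⟨h1, lt_trans h2 h3⟩)
    have e : det2 (pv c) (pv d) (pv a) = det2 (pv a) (pv c) (pv d) := by
      simp only [det2]; ring
    rw [e]; linarith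
  · have : 0 < det2 (pv c) (pv b) (pv d) := det2_pv_pos (Or.inl ⟨h2, h3⟩)
    have e : det2 (pv c) (pv d) (pv b) = -det2 (pv c) (pv b) (pv d) := by
      simp only [det2]; ring
    rw [e]; linarith

/-- a crossing between sorted distinct chords forces interleaving -/
lemma interleave_of_segCross {a b c d : ℕ} (hab : a < b) (hcd : c < d)
    (hne : ¬(a = c ∧ b = d))
    (h : SegCross (pv a) (pv b) (pv c) (pv d)) :
    (a < c ∧ c < b ∧ b < d) ∨ (c < a ∧ a < d ∧ d < b) := by
  by_contra hcon
  have cyc : ∀ x y z : Pt, det2 x y z = det2 z x y := by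
    intro x y z; simp only [det2]; ring
  rcases Nat.lt_trichotomy a c with hac | hac | hac
  · rcases Nat.lt_trichotomy c b with hcb | hcb | hcb
    · rcases Nat.lt_trichotomy b d with hbd | hbd | hbd
      · exact hcon (Or.inl ⟨hac, hcb, hbd⟩)
      · -- b = d : shared endpoint
        subst hbd
        exact noCross_shared (det2_pv_ne (by omega) (by omega) (by omega))
          (segCross_swap_right (segCross_swap_left h))
      · -- nested a < c < d < b
        refine noCross_sameSide ?_ h
        have p1 : 0 < det2 (pv c) (pv d) (pv a) := by
          rw [cyc (pv c) (pv d) (pv a)]; exact det2_pv_pos (Or.inl ⟨hac, hcd⟩)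
        have p2 : 0 < det2 (pv c) (pv d) (pv b) := det2_pv_pos (Or.inl ⟨hcd, hbd⟩)
        positivity
    · -- c = b
      subst hcb
      exact noCross_shared (det2_pv_ne (by omega) (by omega) (by omega))
        (segCross_swap_left h)
    · -- separated a < b < c < d
      refine noCross_sameSide ?_ h
      have p1 : 0 < det2 (pv c) (pv d) (pv a) := by
        rw [cyc (pv c) (pv d) (pv a)]; exact det2_pv_pos (Or.inl ⟨hac, hcd⟩)
      have p2 : 0 < det2 (pv c) (pv d) (pv b) := by
        rw [cyc (pv c) (pv d) (pv b)]; exact det2_pv_pos (Or.inl ⟨hcb, hcd⟩)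
      positivity
  · -- a = c : shared endpoint (b ≠ d)
    subst hac
    exact noCross_shared (det2_pv_ne (by omega) (by omega)
      (fun hbd => hne ⟨rfl, by omega⟩)) h
  · rcases Nat.lt_trichotomy a d with had | had | had
    · rcases Nat.lt_trichotomy d b with hdb | hdb | hdb
      · exact hcon (Or.inr ⟨hac, had, hdb⟩)
      · -- d = b
        subst hdb
        exact noCross_shared (det2_pv_ne (by omega) (by omega) (by omega))
          (segCross_swap_right (segCross_swap_left h))
      · -- nested c < a < b < d
        refine noCross_sameSide (a := pv c) (b := pv d) ?_ (segCross_swap_pairs h)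
        have p1 : 0 < det2 (pv a) (pv b) (pv c) := by
          rw [cyc (pv a) (pv b) (pv c)]; exact det2_pv_pos (Or.inl ⟨hac, hab⟩)
        have p2 : 0 < det2 (pv a) (pv b) (pv d) := det2_pv_pos (Or.inl ⟨hab, hdb⟩)
        positivity
    · -- a = d : shared endpoint
      subst had
      exact noCross_shared (det2_pv_ne (by omega) (by omega) (by omega))
        (segCross_swap_right h)
    · -- separated c < d < a < b
      refine noCross_sameSide ?_ h
      have p1 : 0 < det2 (pv c) (pv d) (pv a) := det2_pv_pos (Or.inl ⟨hcd, had⟩)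
      have p2 : 0 < det2 (pv c) (pv d) (pv b) := det2_pv_pos (Or.inl ⟨hcd, by omega⟩)
      positivity

end ThetaAux


namespace ThetaAux

/-! ## Sym2 / EdgeCross plumbing -/

lemma edgeCross_intro {V : Type} (p : V → Pt) (u v x y : V)
    (h : SegCross (p u) (p v) (p x) (p y)) : EdgeCross p s(u,v) s(x,y) :=
  ⟨u, v, x, y, rfl, rfl, h⟩

lemma crossingFree_of {V : Type} {k : ℕ} (G : SimpleGraph V) (p : V → Pt)
    (φ : Sym2 V → Fin k)
    (H : ∀ u v x y : V, G.Adj u v → G.Adj x y → s(u,v) ≠ s(x,y) →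
      φ s(u,v) = φ s(x,y) → ¬ SegCross (p u) (p v) (p x) (p y)) :
    CrossingFree G p φ := by
  intro e he f hf hne hcol hcr
  obtain ⟨u, v, x, y, he', hf', hs⟩ := hcr
  subst he'; subst hf'
  exact H u v x y ((SimpleGraph.mem_edgeSet G).1 he) ((SimpleGraph.mem_edgeSet G).1 hf) hne hcol hs

lemma sym2_eq_of_vals {n : ℕ} {u v x y : Fin n}
    (h : (u.val = x.val ∧ v.val = y.val) ∨ (u.val = y.val ∧ v.val = x.val)) :
    s(u,v) = s(x,y) := by
  rcases h with ⟨h1, h2⟩ | ⟨h1, h2⟩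
  · rw [Fin.ext h1, Fin.ext h2]
  · rw [Fin.ext h1, Fin.ext h2, Sym2.eq_swap]

lemma sym2_vals_of_eq {n : ℕ} {u v x y : Fin n} (h : s(u,v) = s(x,y)) :
    (u.val = x.val ∧ v.val = y.val) ∨ (u.val = y.val ∧ v.val = x.val) := by
  rcases Sym2.eq_iff.1 h with ⟨h1, h2⟩ | ⟨h1, h2⟩
  · exact Or.inl ⟨by rw [h1], by rw [h2]⟩
  · exact Or.inr ⟨by rw [h1], by rw [h2]⟩

/-- unsorted version of a sorted crossing -/
lemma segCross_unsort_left {u v : ℕ} {C D : Pt}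
    (h : SegCross (pv (min u v)) (pv (max u v)) C D) : SegCross (pv u) (pv v) C D := by
  rcases le_total u v with hle | hle
  · rwa [min_eq_left hle, max_eq_right hle] at h
  · rw [min_eq_right hle, max_eq_left hle] at h
    exact segCross_swap_left h

lemma segCross_sort_left {u v : ℕ} {C D : Pt}
    (h : SegCross (pv u) (pv v) C D) : SegCross (pv (min u v)) (pv (max u v)) C D := by
  rcases le_total u v with hle | hle
  · rwa [min_eq_left hle, max_eq_right hle]
  · rw [min_eq_right hle, max_eq_left hle]
    exact segCross_swap_left h

lemma segCross_sort_right {u v : ℕ} {C D : Pt}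
    (h : SegCross C D (pv u) (pv v)) : SegCross C D (pv (min u v)) (pv (max u v)) :=
  segCross_swap_pairs (segCross_sort_left (segCross_swap_pairs h))

/-! ## The drawing -/

def pmap (n : ℕ) : Fin n → Pt := fun i => pv i.val

lemma collinear_det2 {A B C : Pt} (h : Collinear ℝ ({A, B, C} : Set Pt)) :
    det2 A B C = 0 := by
  rw [collinear_iff_of_mem (Set.mem_insert A _)] at h
  obtain ⟨w, hw⟩ := h
  obtain ⟨rB, hB⟩ := hw B (by simp)
  obtain ⟨rC, hC⟩ := hw C (by simp)
  rw [hB, hC]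
  simp only [det2, vadd_eq_add, Prod.fst_add, Prod.snd_add, Prod.smul_fst, Prod.smul_snd,
    smul_eq_mul]
  ring

lemma pmap_genPos (n : ℕ) : GenPos (pmap n) := by
  constructor
  · intro i j h
    have h1 : ((i.val : ℝ)) = (j.val : ℝ) := congrArg Prod.fst h
    exact Fin.ext (by exact_mod_cast h1)
  · intro u v w huv huw hvw hcol
    have hne : det2 (pmap n u) (pmap n v) (pmap n w) ≠ 0 :=
      det2_pv_ne (fun h => huv (Fin.ext h)) (fun h => huw (Fin.ext h))
        (fun h => hvw (Fin.ext h))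
    exact hne (collinear_det2 hcol)

lemma epi_convex : Convex ℝ {w : Pt | w.1^2 ≤ w.2} := by
  intro w1 hw1 w2 hw2 a b ha hb hab
  simp only [Set.mem_setOf_eq] at *
  have h1 : (a • w1 + b • w2).1 = a * w1.1 + b * w2.1 := by
    simp [Prod.fst_add, Prod.smul_fst, smul_eq_mul]
  have h2 : (a • w1 + b • w2).2 = a * w1.2 + b * w2.2 := by
    simp [Prod.snd_add, Prod.smul_snd, smul_eq_mul]
  rw [h1, h2]
  nlinarith [mul_nonneg (mul_nonneg ha hb) (sq_nonneg (w1.1 - w2.1)),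
    mul_le_mul_of_nonneg_left hw1 ha, mul_le_mul_of_nonneg_left hw2 hb]

set_option maxHeartbeats 1000000 in
lemma pmap_convexPos (n : ℕ) : ConvexPos (pmap n) := by
  have hsub : convexHull ℝ (Set.range (pmap n)) ⊆ {w : Pt | w.1^2 ≤ w.2} := by
    apply convexHull_min _ epi_convex
    rintro _ ⟨j, rfl⟩
    simp [pmap, pv]
  intro i
  rw [mem_extremePoints]
  refine ⟨subset_convexHull ℝ _ ⟨i, rfl⟩, ?_⟩
  intro y hy z hz hseg
  have hy' : y.1^2 ≤ y.2 := hsub hy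
  have hz' : z.1^2 ≤ z.2 := hsub hz
  obtain ⟨t, ht0, ht1, h1, h2⟩ := openSegment_coords hseg
  have e1 : ((i.val : ℝ)) = (1-t) * y.1 + t * z.1 := h1
  have e2 : ((i.val : ℝ))^2 = (1-t) * y.2 + t * z.2 := h2
  have h1t : (0:ℝ) < 1 - t := by linarith
  have e1sq : ((i.val : ℝ))^2 = ((1-t) * y.1 + t * z.1)^2 := by rw [e1]
  have hy2' : (1-t) * y.1^2 ≤ (1-t) * y.2 := mul_le_mul_of_nonneg_left hy' h1t.le
  have hz2' : t * z.1^2 ≤ t * z.2 := mul_le_mul_of_nonneg_left hz' ht0.le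
  have hkey : t * (1-t) * (y.1 - z.1)^2 ≤ 0 := by nlinarith [e1sq, e2, hy2', hz2']
  have hsq : (y.1 - z.1)^2 ≤ 0 := by nlinarith [mul_pos ht0 h1t, sq_nonneg (y.1 - z.1)]
  have hyz : y.1 = z.1 := by nlinarith [sq_nonneg (y.1 - z.1)]
  have hy1 : y.1 = (i.val : ℝ) := by rw [hyz] at e1 ⊢; linarith
  have hz1 : z.1 = (i.val : ℝ) := by rw [← hyz]; exact hy1
  have hyy : ((i.val : ℝ))^2 ≤ y.2 := by rw [← hy1]; exact hy'
  have hzz : ((i.val : ℝ))^2 ≤ z.2 := by rw [← hz1]; exact hz'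
  have m1 : (0:ℝ) ≤ (1-t) * (y.2 - (i.val : ℝ)^2) := mul_nonneg h1t.le (by linarith)
  have m2 : (0:ℝ) ≤ t * (z.2 - (i.val : ℝ)^2) := mul_nonneg ht0.le (by linarith)
  have hy2 : y.2 = (i.val : ℝ)^2 := by nlinarith [e2, m1, m2]
  have hz2 : z.2 = (i.val : ℝ)^2 := by nlinarith [e2, m1, m2]
  have hpi : pmap n i = (((i.val : ℝ)), ((i.val : ℝ))^2) := rfl
  constructor
  · rw [hpi]; exact Prod.ext_iff.2 ⟨hy1, hy2⟩
  · rw [hpi]; exact Prod.ext_iff.2 ⟨hz1, hz2⟩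

end ThetaAux

namespace ThetaAux

/-! ## The construction for k ≥ 2 -/

/-- adjacency (on ℕ values): hull edge or a sum-class edge -/
def gadj (n k a b : ℕ) : Prop :=
  a ≠ b ∧ (b = a + 1 ∨ a = b + 1 ∨ (a = 0 ∧ b = n - 1) ∨ (b = 0 ∧ a = n - 1) ∨
    a + b ≤ k + 1 ∨ (n ≤ a + b ∧ a + b ≤ n + k + 1))

instance (n k a b : ℕ) : Decidable (gadj n k a b) := by unfold gadj; infer_instance

def bigG (n k : ℕ) : SimpleGraph (Fin n) where
  Adj u v := gadj n k u.val v.val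
  symm := by constructor; intro u v h; beta_reduce at *; unfold gadj at *; omega
  loopless := by constructor; intro u h; beta_reduce at h; unfold gadj at h; omega

/-- color value of a sum -/
def colv (n k t : ℕ) : ℕ := min ((if n ≤ t then t - n else t) - 1) (k - 1)

def colF (n k : ℕ) (hk : 0 < k) (t : ℕ) : Fin k :=
  ⟨colv n k t, by unfold colv; omega⟩

def φmap (n k : ℕ) (hk : 0 < k) : Sym2 (Fin n) → Fin k :=
  Sym2.lift ⟨fun u v => colF n k hk (u.val + v.val), fun u v => by simp only []; rw [Nat.add_comm]⟩

lemma φmap_mk (n k : ℕ) (hk : 0 < k) (u v : Fin n) :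
    φmap n k hk s(u,v) = colF n k hk (u.val + v.val) := rfl

/-- arithmetic core: two same-colored sum-edges cannot interleave -/
lemma color_clash (n k a b c d : ℕ) (hn : 5 ≤ n) (hk : 2 ≤ k) (hkn : 2*k ≤ n)
    (hbn : b < n) (hdn : d < n) (hab : a < b) (hcd : c < d)
    (h1 : b = a + 1 ∨ (a = 0 ∧ b = n - 1) ∨ a + b ≤ k + 1 ∨ (n ≤ a + b ∧ a + b ≤ n + k + 1))
    (h2 : d = c + 1 ∨ (c = 0 ∧ d = n - 1) ∨ c + d ≤ k + 1 ∨ (n ≤ c + d ∧ c + d ≤ n + k + 1))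
    (hint : (a < c ∧ c < b ∧ b < d) ∨ (c < a ∧ a < d ∧ d < b))
    (hcol : colv n k (a + b) = colv n k (c + d)) : False := by
  unfold colv at hcol
  split_ifs at hcol <;> omega

/-- the construction is crossing-free -/
lemma bigG_crossingFree (n k : ℕ) (hn : 5 ≤ n) (hk : 2 ≤ k) (hkn : 2*k ≤ n) :
    CrossingFree (bigG n k) (pmap n) (φmap n k (by omega)) := by
  apply crossingFree_of
  intro u v x y huv hxy hne hcol hS
  -- sort both pairs
  set a := min u.val v.val with ha
  set b := max u.val v.val with hb
  set c := min x.val y.val with hc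
  set d := max x.val y.val with hd
  have hS' : SegCross (pv a) (pv b) (pv c) (pv d) :=
    segCross_sort_right (segCross_sort_left hS)
  have huv' : gadj n k u.val v.val := huv
  have hxy' : gadj n k x.val y.val := hxy
  have hab : a < b := by unfold gadj at huv'; omega
  have hcd : c < d := by unfold gadj at hxy'; omega
  have hbn : b < n := by
    have := u.isLt; have := v.isLt; omega
  have hdn : d < n := by
    have := x.isLt; have := y.isLt; omega
  have hne' : ¬(a = c ∧ b = d) := by
    rintro ⟨h1, h2⟩
    apply hne
    apply sym2_eq_of_vals
    omega
  have hint := interleave_of_segCross hab hcd hne' hS'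
  have hcol' : colv n k (a + b) = colv n k (c + d) := by
    have h1 : colv n k (u.val + v.val) = colv n k (x.val + y.val) := by
      have := congrArg Fin.val hcol
      simpa [φmap_mk, colF] using this
    have ea : a + b = u.val + v.val := by omega
    have ec : c + d = x.val + y.val := by omega
    rw [ea, ec]; exact h1
  have h1s : b = a + 1 ∨ (a = 0 ∧ b = n - 1) ∨ a + b ≤ k + 1 ∨
      (n ≤ a + b ∧ a + b ≤ n + k + 1) := by unfold gadj at huv'; omega
  have h2s : d = c + 1 ∨ (c = 0 ∧ d = n - 1) ∨ c + d ≤ k + 1 ∨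
      (n ≤ c + d ∧ c + d ≤ n + k + 1) := by unfold gadj at hxy'; omega
  exact color_clash n k a b c d hn hk hkn hbn hdn hab hcd h1s h2s hint hcol'

end ThetaAux

namespace ThetaAux

/-- arithmetic core: blocker existence -/
lemma blocker (n k a b s : ℕ) (hn : 5 ≤ n) (hk : 2 ≤ k) (hkn : 2*k ≤ n)
    (hab : a < b) (hbn : b < n) (hs1 : 1 ≤ s) (hsk : s ≤ k)
    (hnadj : ¬(b = a + 1 ∨ (a = 0 ∧ b = n - 1) ∨ a + b ≤ k + 1 ∨
      (n ≤ a + b ∧ a + b ≤ n + k + 1))) :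
    ∃ x y : ℕ, x < y ∧ y < n ∧ (x + y = s ∨ x + y = n + s) ∧
      ((a < x ∧ x < b ∧ b < y) ∨ (x < a ∧ a < y ∧ y < b)) := by
  by_cases hle : a + 1 ≤ s
  · -- r = s - a - 1
    by_cases h1 : s - a - 1 < a
    · exact ⟨s - a - 1, a + 1, by omega, by omega, by omega, by omega⟩
    · by_cases h2 : b < s - a - 1
      · exact ⟨a + 1, s - a - 1, by omega, by omega, by omega, by omega⟩
      · -- middle: a ≤ r ≤ b, here r ≤ b - 3
        by_cases h3 : 1 ≤ a
        · exact ⟨a - 1, s - a - 1 + 2, by omega, by omega, by omega, by omega⟩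
        · -- a = 0, r = s - 1, witness (s+1, n-1)
          exact ⟨s + 1, n - 1, by omega, by omega, by omega, by omega⟩
  · -- a ≥ s, r = n + s - a - 1
    by_cases h1 : n + s - a - 1 < a
    · exact ⟨n + s - a - 1, a + 1, by omega, by omega, by omega, by omega⟩
    · by_cases h2 : b < n + s - a - 1
      · exact ⟨a + 1, n + s - a - 1, by omega, by omega, by omega, by omega⟩
      · -- middle, a ≥ s ≥ 1
        exact ⟨a - 1, n + s - a - 1 + 2, by omega, by omega, by omega, by omega⟩

/-- the construction is saturated -/
lemma bigG_saturated (n k : ℕ) (hn : 5 ≤ n) (hk : 2 ≤ k) (hkn : 2*k ≤ n) :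
    PrecoloredSaturated (bigG n k) (pmap n) (φmap n k (by omega)) := by
  intro u v huv hnadj c hcf
  set a := min u.val v.val with ha
  set b := max u.val v.val with hb
  have hvals : u.val ≠ v.val := fun h => huv (Fin.ext h)
  have hab : a < b := by omega
  have hbn : b < n := by have := u.isLt; have := v.isLt; omega
  have hnadj' : ¬(b = a + 1 ∨ (a = 0 ∧ b = n - 1) ∨ a + b ≤ k + 1 ∨
      (n ≤ a + b ∧ a + b ≤ n + k + 1)) := by
    intro h
    exact hnadj (show gadj n k u.val v.val by unfold gadj; omega)
  set s := c.val + 1 with hs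
  have hsk : s ≤ k := by have := c.isLt; omega
  obtain ⟨x, y, hxy, hyn, hsum, hpat⟩ :=
    blocker n k a b s hn hk hkn hab hbn (by omega) hsk hnadj'
  set x' : Fin n := ⟨x, by omega⟩ with hx'
  set y' : Fin n := ⟨y, by omega⟩ with hy'
  -- the blocker is an edge of bigG
  have hadjxy : (bigG n k).Adj x' y' := by
    show gadj n k x y
    unfold gadj; omega
  have hne : s(u, v) ≠ s(x', y') := by
    intro h
    rcases sym2_vals_of_eq h with ⟨e1, e2⟩ | ⟨e1, e2⟩ <;>
      simp only [hx', hy'] at e1 e2 <;> omega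
  -- apply the crossing-freeness hypothesis to the new edge and the blocker
  have hmem1 : s(u, v) ∈ (bigG n k ⊔ SimpleGraph.fromEdgeSet {s(u, v)}).edgeSet := by
    rw [SimpleGraph.mem_edgeSet]
    exact Or.inr ⟨rfl, huv⟩
  have hmem2 : s(x', y') ∈ (bigG n k ⊔ SimpleGraph.fromEdgeSet {s(u, v)}).edgeSet := by
    rw [SimpleGraph.mem_edgeSet]
    exact Or.inl hadjxy
  -- produce the crossing
  have hcross : EdgeCross (pmap n) s(u, v) s(x', y') := by
    have hSab : SegCross (pv a) (pv b) (pv x) (pv y) := by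
      rcases hpat with ⟨p1, p2, p3⟩ | ⟨p1, p2, p3⟩
      · exact segCross_of_interleave p1 p2 p3
      · exact segCross_swap_pairs (segCross_of_interleave p1 p2 p3)
    have hSuv : SegCross (pv u.val) (pv v.val) (pv x) (pv y) := segCross_unsort_left hSab
    exact edgeCross_intro (pmap n) u v x' y' hSuv
  refine hcf s(u,v) hmem1 s(x',y') hmem2 hne ?_ hcross
  beta_reduce
  rw [if_pos rfl, if_neg (Ne.symm hne), φmap_mk]
  refine Fin.ext ?_
  show c.val = colv n k (x'.val + y'.val)
  show c.val = colv n k (x + y)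
  unfold colv
  have := c.isLt
  split_ifs <;> omega

end ThetaAux

namespace ThetaAux

/-! ## Counting -/

def bpart (n s a : ℕ) : ℕ := if 2*a + 1 ≤ s then s - a else n + s - a

def Ws (n s : ℕ) : Finset ℕ :=
  (Finset.range n).filter fun a =>
    a < bpart n s a ∧ bpart n s a < n ∧ bpart n s a ≠ a + 1 ∧
      ¬(a = 0 ∧ bpart n s a = n - 1)

lemma Ws_card_even (n s : ℕ) (hn : 5 ≤ n) (hsn : 2*s ≤ n + 2) (hs : s % 2 = 0) :
    (Ws n s).card ≤ (n - 2) / 2 := by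
  have := Finset.card_le_card_of_injOn (s := Ws n s)
    (f := fun a => if 2*a + 1 ≤ s then a else a - ((s+1)/2 + 1))
    (t := Finset.range ((n-2)/2)) ?_ ?_
  · simpa using this
  · intro a ha
    simp only [Ws, Finset.mem_coe, Finset.mem_filter, Finset.mem_range] at ha ⊢
    simp only [bpart] at ha ⊢
    split_ifs at ha ⊢ <;> omega
  · intro a1 h1 a2 h2 heq
    simp only [Ws, Finset.mem_coe, Finset.mem_filter, Finset.mem_range] at h1 h2
    simp only [bpart] at h1 h2
    beta_reduce at heq
    split_ifs at h1 h2 heq <;> omega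

lemma Ws_card_odd (n s : ℕ) (hn : 5 ≤ n) (hsn : 2*s ≤ n + 2) (hs : s % 2 = 1) :
    (Ws n s).card ≤ (n - 3) / 2 := by
  have := Finset.card_le_card_of_injOn (s := Ws n s)
    (f := fun a => if 2*a + 1 ≤ s then a else a - ((s+1)/2 + 1))
    (t := Finset.range ((n-3)/2)) ?_ ?_
  · simpa using this
  · intro a ha
    simp only [Ws, Finset.mem_coe, Finset.mem_filter, Finset.mem_range] at ha ⊢
    simp only [bpart] at ha ⊢
    split_ifs at ha ⊢ <;> omega
  · intro a1 h1 a2 h2 heq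
    simp only [Ws, Finset.mem_coe, Finset.mem_filter, Finset.mem_range] at h1 h2
    simp only [bpart] at h1 h2
    beta_reduce at heq
    split_ifs at h1 h2 heq <;> omega

def Thull (n : ℕ) : Finset (ℕ × ℕ) :=
  ((Finset.range (n-1)).image fun a => (a, a+1)) ∪ {(0, n-1)}

def Tsum (n k : ℕ) : Finset (ℕ × ℕ) :=
  (Finset.range (k+2)).biUnion fun s => (Ws n s).image fun a => (a, bpart n s a)

def μmap (n : ℕ) : Sym2 (Fin n) → ℕ × ℕ :=
  Sym2.lift ⟨fun u v => (min u.val v.val, max u.val v.val),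
    fun u v => by simp only []; rw [min_comm, max_comm]⟩

lemma μmap_inj (n : ℕ) : Function.Injective (μmap n) := by
  intro e f h
  induction e using Sym2.ind with
  | _ u v =>
  induction f using Sym2.ind with
  | _ x y =>
  have h1 : min u.val v.val = min x.val y.val := congrArg Prod.fst h
  have h2 : max u.val v.val = max x.val y.val := congrArg Prod.snd h
  exact sym2_eq_of_vals (by omega)

lemma μmap_edge_mem (n k : ℕ) (hn : 5 ≤ n) (hk : 2 ≤ k) (hkn : 2*k ≤ n) :
    ∀ e ∈ (bigG n k).edgeSet, μmap n e ∈ Thull n ∪ Tsum n k := by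
  intro e
  induction e using Sym2.ind with
  | _ u v =>
  intro he
  have hadj : gadj n k u.val v.val := (SimpleGraph.mem_edgeSet _).1 he
  have hμ : μmap n s(u,v) = (min u.val v.val, max u.val v.val) := rfl
  rw [hμ]
  set a := min u.val v.val with ha
  set b := max u.val v.val with hb
  have hab : a < b := by unfold gadj at hadj; omega
  have hbn : b < n := by have := u.isLt; have := v.isLt; omega
  simp only [Thull, Tsum, Finset.mem_union, Finset.mem_image, Finset.mem_biUnion,
    Finset.mem_range, Finset.mem_singleton, Ws, Finset.mem_filter]
  by_cases hh1 : b = a + 1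
  · exact Or.inl (Or.inl ⟨a, by omega, Prod.ext_iff.2 ⟨rfl, by omega⟩⟩)
  · by_cases hh2 : a = 0 ∧ b = n - 1
    · exact Or.inl (Or.inr (Prod.ext_iff.2 ⟨by omega, by omega⟩))
    · -- sum edge
      have hsum : a + b ≤ k + 1 ∨ (n ≤ a + b ∧ a + b ≤ n + k + 1) := by
        unfold gadj at hadj; omega
      refine Or.inr ?_
      by_cases hlt : a + b < n
      · refine ⟨a + b, by omega, a, ⟨by omega, ?_, ?_, ?_, ?_⟩, ?_⟩
        · unfold bpart; split_ifs <;> omega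
        · unfold bpart; split_ifs <;> omega
        · unfold bpart; split_ifs <;> omega
        · unfold bpart; split_ifs <;> omega
        · refine Prod.ext_iff.2 ⟨rfl, ?_⟩
          show bpart n (a+b) a = b
          unfold bpart; split_ifs <;> omega
      · refine ⟨a + b - n, by omega, a, ⟨by omega, ?_, ?_, ?_, ?_⟩, ?_⟩
        · unfold bpart; split_ifs <;> omega
        · unfold bpart; split_ifs <;> omega
        · unfold bpart; split_ifs <;> omega
        · unfold bpart; split_ifs <;> omega
        · refine Prod.ext_iff.2 ⟨rfl, ?_⟩
          show bpart n (a+b-n) a = b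
          unfold bpart; split_ifs <;> omega

lemma sum_range_pair_le (f : ℕ → ℕ) (M : ℕ) (m : ℕ) (h : ∀ j, j < m → f (2*j) + f (2*j+1) ≤ M) :
    (Finset.range (2*m)).sum f ≤ m * M := by
  induction m with
  | zero => simp
  | succ m ih =>
    have h2 : 2*(m+1) = (2*m + 1) + 1 := by ring
    rw [h2, Finset.sum_range_succ, Finset.sum_range_succ]
    have hih := ih (fun j hj => h j (by omega))
    have hm := h m (by omega)
    calc (Finset.range (2*m)).sum f + f (2*m) + f (2*m+1)
        ≤ m * M + (f (2*m) + f (2*m+1)) := by omega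
      _ ≤ m * M + M := by omega
      _ = (m+1) * M := by ring

lemma bigG_count (n k : ℕ) (hn : 5 ≤ n) (hk : 2 ≤ k) (hkn : 2*k ≤ n) :
    2 * (bigG n k).edgeSet.ncard ≤ (k+4) * (n-2) := by
  -- edge set injects into Thull ∪ Tsum
  have hinj : (bigG n k).edgeSet.ncard ≤ (Thull n ∪ Tsum n k).card := by
    have h1 : (bigG n k).edgeSet.ncard ≤ ((Thull n ∪ Tsum n k : Finset (ℕ×ℕ)) : Set (ℕ×ℕ)).ncard := by
      apply Set.ncard_le_ncard_of_injOn (μmap n)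
      · intro e he
        simpa using μmap_edge_mem n k hn hk hkn e he
      · exact (μmap_inj n).injOn
    simpa [← Finset.coe_union, Set.ncard_coe_finset] using h1
  have hThull : (Thull n).card ≤ n := by
    unfold Thull
    calc _ ≤ ((Finset.range (n-1)).image fun a => (a, a+1)).card + ({(0, n-1)} : Finset (ℕ×ℕ)).card :=
          Finset.card_union_le _ _
      _ ≤ (n-1) + 1 := by
          gcongr
          · exact le_trans (Finset.card_image_le) (by simp)
          · simp
      _ ≤ n := by omega
  have hTsum : (Tsum n k).card ≤ (Finset.range (k+2)).sum fun s => (Ws n s).card := by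
    unfold Tsum
    calc _ ≤ (Finset.range (k+2)).sum fun s => ((Ws n s).image fun a => (a, bpart n s a)).card :=
          Finset.card_biUnion_le
      _ ≤ _ := Finset.sum_le_sum fun s _ => Finset.card_image_le
  have hcard : (Thull n ∪ Tsum n k).card ≤ n + (Finset.range (k+2)).sum fun s => (Ws n s).card := by
    calc (Thull n ∪ Tsum n k).card ≤ (Thull n).card + (Tsum n k).card := Finset.card_union_le _ _
      _ ≤ _ := by omega
  set S := (Finset.range (k+2)).sum fun s => (Ws n s).card with hS
  have hE : (bigG n k).edgeSet.ncard ≤ n + S := by omega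
  have hpair : ∀ j, 2*j + 1 ≤ k + 1 → (Ws n (2*j)).card + (Ws n (2*j+1)).card ≤ n - 3 := by
    intro j hj
    have h1 := Ws_card_even n (2*j) hn (by omega) (by omega)
    have h2 := Ws_card_odd n (2*j+1) hn (by omega) (by omega)
    omega
  rcases Nat.even_or_odd k with ⟨m, hm⟩ | ⟨m, hm⟩
  · -- k = 2m
    have hk2 : k + 2 = 2 * (m + 1) := by omega
    have hSb : S ≤ (m+1) * (n-3) := by
      rw [hS, hk2]
      exact sum_range_pair_le _ _ (m+1) (fun j hj => hpair j (by omega))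
    have hkz : (k:ℤ) = 2*(m:ℤ) := by omega
    have key : ((k:ℤ)+4) * ((n:ℤ)-2) = 2*(n:ℤ) + 2*((m:ℤ)+1)*((n:ℤ)-3) + ((k:ℤ) - 2) := by
      rw [hkz]; ring
    have hSbz : (S:ℤ) ≤ ((m:ℤ)+1) * ((n:ℤ)-3) := by
      have := hSb
      zify [show (3:ℕ) ≤ n by omega] at this
      linarith
    have hEz : ((bigG n k).edgeSet.ncard : ℤ) ≤ (n:ℤ) + S := by exact_mod_cast hE
    have hk2z : (2:ℤ) ≤ (k:ℤ) := by exact_mod_cast hk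
    zify [show (2:ℕ) ≤ n by omega]
    linarith [key, hSbz, hEz, hk2z]
  · -- k = 2m+1, k ≥ 3
    have hk3 : 3 ≤ k := by omega
    have hk2 : k + 2 = 2 * (m + 1) + 1 := by omega
    set W := (n-2)/2 with hW
    have hlast : (Ws n (2*(m+1))).card ≤ W := by
      have := Ws_card_even n (2*(m+1)) hn (by omega) (by omega)
      omega
    have hSb : S ≤ (m+1) * (n-3) + W := by
      rw [hS, hk2, Finset.sum_range_succ]
      have h1 : (Finset.range (2*(m+1))).sum (fun s => (Ws n s).card) ≤ (m+1)*(n-3) :=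
        sum_range_pair_le _ _ (m+1) (fun j hj => hpair j (by omega))
      omega
    have hkz : (k:ℤ) = 2*(m:ℤ) + 1 := by omega
    have key : ((k:ℤ)+4) * ((n:ℤ)-2) =
        2*(n:ℤ) + 2*((m:ℤ)+1)*((n:ℤ)-3) + ((n:ℤ)-2) + 2*((m:ℤ) - 1) := by
      rw [hkz]; ring
    have hWz : 2 * (W:ℤ) ≤ (n:ℤ) - 2 := by omega
    have hSbz : (S:ℤ) ≤ ((m:ℤ)+1) * ((n:ℤ)-3) + (W:ℤ) := by
      have := hSb
      zify [show (3:ℕ) ≤ n by omega] at this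
      linarith
    have hEz : ((bigG n k).edgeSet.ncard : ℤ) ≤ (n:ℤ) + S := by exact_mod_cast hE
    have hmz : (1:ℤ) ≤ (m:ℤ) := by omega
    zify [show (2:ℕ) ≤ n by omega]
    linarith [key, hSbz, hEz, hmz, hWz]

end ThetaAux

namespace ThetaAux

/-! ## The wheel construction for k = 1 -/

def wadj (n a b : ℕ) : Prop := a ≠ b ∧ (a = 0 ∨ b = 0 ∨ b = a + 1 ∨ a = b + 1)

instance (n a b : ℕ) : Decidable (wadj n a b) := by unfold wadj; infer_instance

def wheelG (n : ℕ) : SimpleGraph (Fin n) where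
  Adj u v := wadj n u.val v.val
  symm := by constructor; intro u v h; beta_reduce at *; unfold wadj at *; omega
  loopless := by constructor; intro u h; beta_reduce at h; unfold wadj at h; omega

lemma wheel_crossingFree (n k : ℕ) (hn : 5 ≤ n) (hk : 1 ≤ k) :
    CrossingFree (wheelG n) (pmap n) (fun _ => (⟨0, by omega⟩ : Fin k)) := by
  apply crossingFree_of
  intro u v x y huv hxy hne _ hS
  set a := min u.val v.val with ha
  set b := max u.val v.val with hb
  set c := min x.val y.val with hc
  set d := max x.val y.val with hd
  have hS' : SegCross (pv a) (pv b) (pv c) (pv d) :=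
    segCross_sort_right (segCross_sort_left hS)
  have huv' : wadj n u.val v.val := huv
  have hxy' : wadj n x.val y.val := hxy
  have hab : a < b := by unfold wadj at huv'; omega
  have hcd : c < d := by unfold wadj at hxy'; omega
  have hne' : ¬(a = c ∧ b = d) := by
    rintro ⟨h1, h2⟩
    exact hne (sym2_eq_of_vals (by omega))
  have hint := interleave_of_segCross hab hcd hne' hS'
  unfold wadj at huv' hxy'
  omega

lemma wheel_saturated (n k : ℕ) (hn : 5 ≤ n) (hk1 : k = 1) :
    PrecoloredSaturated (wheelG n) (pmap n) (fun _ => (⟨0, by omega⟩ : Fin k)) := by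
  intro u v huv hnadj c hcf
  set a := min u.val v.val with ha
  set b := max u.val v.val with hb
  have hvals : u.val ≠ v.val := fun h => huv (Fin.ext h)
  have hab : a < b := by omega
  have hbn : b < n := by have := u.isLt; have := v.isLt; omega
  have hfacts : 1 ≤ a ∧ a + 2 ≤ b := by
    by_contra hcon
    exact hnadj (show wadj n u.val v.val by unfold wadj; omega)
  set x' : Fin n := ⟨0, by omega⟩ with hx'
  set y' : Fin n := ⟨a + 1, by omega⟩ with hy'
  have hadjxy : (wheelG n).Adj x' y' := by
    show wadj n 0 (a+1)
    unfold wadj; omega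
  have hne : s(u, v) ≠ s(x', y') := by
    intro h
    rcases sym2_vals_of_eq h with ⟨e1, e2⟩ | ⟨e1, e2⟩
    · have E1 : u.val = 0 := e1
      have E2 : v.val = a + 1 := e2
      omega
    · have E1 : u.val = a + 1 := e1
      have E2 : v.val = 0 := e2
      omega
  have hmem1 : s(u, v) ∈ (wheelG n ⊔ SimpleGraph.fromEdgeSet {s(u, v)}).edgeSet := by
    rw [SimpleGraph.mem_edgeSet]
    exact Or.inr ⟨rfl, huv⟩
  have hmem2 : s(x', y') ∈ (wheelG n ⊔ SimpleGraph.fromEdgeSet {s(u, v)}).edgeSet := by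
    rw [SimpleGraph.mem_edgeSet]
    exact Or.inl hadjxy
  have hcross : EdgeCross (pmap n) s(u, v) s(x', y') := by
    have hSab : SegCross (pv a) (pv b) (pv 0) (pv (a+1)) :=
      segCross_swap_pairs (segCross_of_interleave (by omega) (by omega) (by omega))
    exact edgeCross_intro (pmap n) u v x' y' (segCross_unsort_left hSab)
  refine hcf s(u,v) hmem1 s(x',y') hmem2 hne ?_ hcross
  beta_reduce
  rw [if_pos rfl, if_neg (Ne.symm hne)]
  have hczero : c.val = 0 := by have := c.isLt; omega
  exact Fin.ext (by rw [hczero])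

lemma wheel_count (n : ℕ) (hn : 5 ≤ n) :
    (wheelG n).edgeSet.ncard ≤ (n - 1) + (n - 2) := by
  set T : Finset (ℕ × ℕ) :=
    ((Finset.Ico 1 n).image fun b => ((0:ℕ), b)) ∪
    ((Finset.Ico 1 (n-1)).image fun a => (a, a+1)) with hT
  have h1 : (wheelG n).edgeSet.ncard ≤ ((T : Finset (ℕ×ℕ)) : Set (ℕ×ℕ)).ncard := by
    apply Set.ncard_le_ncard_of_injOn (μmap n)
    · intro e
      induction e using Sym2.ind with
      | _ u v =>
      intro he
      have hadj : wadj n u.val v.val := (SimpleGraph.mem_edgeSet _).1 he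
      have hμ : μmap n s(u,v) = (min u.val v.val, max u.val v.val) := rfl
      rw [hμ]
      set a := min u.val v.val with ha
      set b := max u.val v.val with hb
      have hab : a < b := by unfold wadj at hadj; omega
      have hbn : b < n := by have := u.isLt; have := v.isLt; omega
      simp only [hT, Finset.coe_union, Set.mem_union, Finset.coe_image, Set.mem_image,
        Finset.mem_coe, Finset.mem_Ico]
      by_cases hh : a = 0
      · exact Or.inl ⟨b, by omega, Prod.ext_iff.2 ⟨by omega, rfl⟩⟩
      · have hb1 : b = a + 1 := by unfold wadj at hadj; omega
        exact Or.inr ⟨a, by omega, Prod.ext_iff.2 ⟨rfl, by omega⟩⟩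
    · exact (μmap_inj n).injOn
  have h2 : T.card ≤ (n-1) + (n-2) := by
    calc T.card ≤ ((Finset.Ico 1 n).image fun b => ((0:ℕ), b)).card +
        ((Finset.Ico 1 (n-1)).image fun a => (a, a+1)).card := Finset.card_union_le _ _
      _ ≤ (n-1) + (n-2) := by
          gcongr
          · exact le_trans Finset.card_image_le (by rw [Nat.card_Ico])
          · exact le_trans Finset.card_image_le (by rw [Nat.card_Ico]; omega)
  calc (wheelG n).edgeSet.ncard ≤ ((T : Finset (ℕ×ℕ)) : Set (ℕ×ℕ)).ncard := h1
    _ = T.card := Set.ncard_coe_finset _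
    _ ≤ (n-1) + (n-2) := h2

/-! ## Existence of a good construction -/

lemma exists_construction (n k : ℕ) (hn : 5 ≤ n) (hk : 1 ≤ k) (hkn : 2*k ≤ n) :
    ∃ (G' : SimpleGraph (Fin n)) (φ' : Sym2 (Fin n) → Fin k),
      CrossingFree G' (pmap n) φ' ∧ PrecoloredSaturated G' (pmap n) φ' ∧
      2 * G'.edgeSet.ncard ≤ (k+4) * (n-2) := by
  rcases eq_or_lt_of_le hk with hk1 | hk2
  · -- k = 1 : wheel
    refine ⟨wheelG n, fun _ => ⟨0, by omega⟩, wheel_crossingFree n k hn hk,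
      wheel_saturated n k hn hk1.symm, ?_⟩
    have := wheel_count n hn
    have hk1' : k = 1 := hk1.symm
    subst hk1'
    omega
  · -- k ≥ 2
    have hk' : 2 ≤ k := hk2
    refine ⟨bigG n k, φmap n k (by omega), bigG_crossingFree n k hn hk' hkn,
      bigG_saturated n k hn hk' hkn, bigG_count n k hn hk' hkn⟩

end ThetaAux

/-- Every min-saturated convex precolored Θ^k-drawing of a graph
on `n ≥ 5` vertices (with `k ≤ n/2`) has at most `(k+4)(n-2)/2` edges. -/
theorem stmt1 (n k : ℕ) (hn : 5 ≤ n) (hk : 1 ≤ k) (hkn : 2 * k ≤ n)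
    (G : SimpleGraph (Fin n)) (p : Fin n → Pt) (φ : Sym2 (Fin n) → Fin k)
    (hgen : GenPos p) (hconv : ConvexPos p)
    (hφ : CrossingFree G p φ) (hsat : PrecoloredSaturated G p φ)
    (hmin : ∀ (G' : SimpleGraph (Fin n)) (p' : Fin n → Pt)
        (φ' : Sym2 (Fin n) → Fin k),
        GenPos p' → ConvexPos p' → CrossingFree G' p' φ' →
        PrecoloredSaturated G' p' φ' →
        G.edgeSet.ncard ≤ G'.edgeSet.ncard) :
    2 * (G.edgeSet.ncard : ℤ) ≤ ((k : ℤ) + 4) * ((n : ℤ) - 2) := by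
  obtain ⟨G', φ', h3, h4, h5⟩ := ThetaAux.exists_construction n k hn hk hkn
  have hle := hmin G' (ThetaAux.pmap n) φ' (ThetaAux.pmap_genPos n)
    (ThetaAux.pmap_convexPos n) h3 h4
  have hfin : 2 * G.edgeSet.ncard ≤ (k+4) * (n-2) := le_trans (by omega) h5
  have hcast : (((k+4) * (n-2) : ℕ) : ℤ) = ((k:ℤ) + 4) * ((n:ℤ) - 2) := by
    push_cast [Nat.cast_sub (show 2 ≤ n by omega)]; ring
  calc 2 * (G.edgeSet.ncard : ℤ) = ((2 * G.edgeSet.ncard : ℕ) : ℤ) := by push_cast; ring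
    _ ≤ (((k+4) * (n-2) : ℕ) : ℤ) := by exact_mod_cast hfin
    _ = ((k:ℤ) + 4) * ((n:ℤ) - 2) := hcast
end

section
/- Every saturated convex Θ^2-drawing of a graph G on n ≥ 3 vertices has exactly 3n − 6 edges. -/
open scoped Classical

lemma det2_cyc (a b c : Pt) : det2 a b c = det2 b c a := by simp only [det2]; ring
lemma det2_swap12 (a b c : Pt) : det2 b a c = - det2 a b c := by simp only [det2]; ring
lemma det2_swap23 (a b c : Pt) : det2 a c b = - det2 a b c := by simp only [det2]; ring
lemma det2_self12 (a c : Pt) : det2 a a c = 0 := by simp only [det2]; ring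
lemma det2_self13 (a c : Pt) : det2 a c a = 0 := by simp only [det2]; ring
lemma det2_self23 (a c : Pt) : det2 a c c = 0 := by simp only [det2]; ring

lemma det2_combo (a b c d : Pt) (s t : ℝ) (h : s + t = 1) :
    det2 a b (s • c + t • d) = s * det2 a b c + t * det2 a b d := by
  have ht : t = 1 - s := by linarith
  subst ht
  simp only [det2, Prod.fst_add, Prod.snd_add, Prod.smul_fst, Prod.smul_snd, smul_eq_mul]
  ring

lemma exists_param_of_det2 {a b c : Pt} (hab : a ≠ b) (h : det2 a b c = 0) :
    ∃ t : ℝ, c = a + t • (b - a) := by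
  have hne : b.1 - a.1 ≠ 0 ∨ b.2 - a.2 ≠ 0 := by
    by_contra hcon
    push_neg at hcon
    exact hab (Prod.ext (by linarith [hcon.1]) (by linarith [hcon.2])).symm
  simp only [det2] at h
  rcases hne with h1 | h2
  · refine ⟨(c.1 - a.1) / (b.1 - a.1), ?_⟩
    apply Prod.ext
    · simp only [Prod.fst_add, Prod.smul_fst, Prod.fst_sub, smul_eq_mul]
      field_simp
      ring
    · simp only [Prod.snd_add, Prod.smul_snd, Prod.snd_sub, smul_eq_mul]
      field_simp
      nlinarith [h]
  · refine ⟨(c.2 - a.2) / (b.2 - a.2), ?_⟩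
    apply Prod.ext
    · simp only [Prod.fst_add, Prod.smul_fst, Prod.fst_sub, smul_eq_mul]
      field_simp
      nlinarith [h]
    · simp only [Prod.snd_add, Prod.smul_snd, Prod.snd_sub, smul_eq_mul]
      field_simp
      ring

lemma collinear_of_det2 {a b c : Pt} (hab : a ≠ b) (h : det2 a b c = 0) :
    Collinear ℝ ({a, b, c} : Set Pt) := by
  obtain ⟨t, ht⟩ := exists_param_of_det2 hab h
  rw [collinear_iff_of_mem (Set.mem_insert a {b, c})]
  refine ⟨b - a, ?_⟩
  intro q hq
  rcases hq with rfl | rfl | rfl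
  · exact ⟨0, by simp⟩
  · exact ⟨1, by simp⟩
  · exact ⟨t, by rw [ht]; simp [add_comm]⟩

/-- combination form of a parametrized point -/
lemma param_eq_combo (c d : Pt) (u : ℝ) : c + u • (d - c) = (1 - u) • c + u • d := by
  apply Prod.ext <;>
    simp only [Prod.fst_add, Prod.snd_add, Prod.smul_fst, Prod.smul_snd, Prod.fst_sub,
      Prod.snd_sub, smul_eq_mul] <;> ring

lemma det2_of_openSegment {c d a b x : Pt} (h : x ∈ openSegment ℝ a b) :
    ∃ s t : ℝ, 0 < s ∧ 0 < t ∧ s + t = 1 ∧ det2 c d x = s * det2 c d a + t * det2 c d b := by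
  obtain ⟨s, t, hs, ht, hst, hx⟩ := h
  exact ⟨s, t, hs, ht, hst, by rw [← hx, det2_combo _ _ _ _ _ _ hst]⟩

lemma det2_zero_of_openSegment {c d x : Pt} (h : x ∈ openSegment ℝ c d) :
    det2 c d x = 0 := by
  obtain ⟨s, t, hs, ht, hst, hx⟩ := h
  rw [← hx, det2_combo _ _ _ _ _ _ hst, det2_self13, det2_self23]
  ring

lemma segcross_of_det {a b c d : Pt}
    (h1 : det2 c d a * det2 c d b < 0) (h2 : det2 a b c * det2 a b d < 0) :
    SegCross a b c d := by
  have hcd : c ≠ d := by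
    rintro rfl
    rw [det2_self12] at h1
    simp at h1
  set fa := det2 c d a with hfa
  set fb := det2 c d b with hfb
  have hfab : fa - fb ≠ 0 := by
    rcases mul_neg_iff.1 h1 with ⟨ha, hb⟩ | ⟨ha, hb⟩ <;> intro hcon <;> nlinarith
  set t := fa / (fa - fb) with htdef
  set s := -fb / (fa - fb) with hsdef
  have hst : s + t = 1 := by rw [hsdef, htdef, ← add_div, div_eq_one_iff_eq hfab]; ring
  have hs : 0 < s := by
    rcases mul_neg_iff.1 h1 with ⟨ha, hb⟩ | ⟨ha, hb⟩
    · exact div_pos (by linarith) (by linarith)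
    · rw [hsdef, div_pos_iff]
      right; constructor <;> linarith
  have ht : 0 < t := by
    rcases mul_neg_iff.1 h1 with ⟨ha, hb⟩ | ⟨ha, hb⟩
    · exact div_pos ha (by linarith)
    · rw [htdef, div_pos_iff]
      right; constructor <;> linarith
  set x := s • a + t • b with hxdef
  have hxab : x ∈ openSegment ℝ a b := ⟨s, t, hs, ht, hst, rfl⟩
  have hdx : det2 c d x = 0 := by
    rw [hxdef, det2_combo _ _ _ _ _ _ hst, ← hfa, ← hfb]
    field_simp [hsdef, htdef]
    ring
  obtain ⟨u, hu⟩ := exists_param_of_det2 hcd hdx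
  have hgx : det2 a b x = 0 := by
    rw [hxdef, det2_combo _ _ _ _ _ _ hst, det2_self13, det2_self23]
    ring
  have hux : x = (1 - u) • c + u • d := by rw [hu, param_eq_combo]
  have hcomb : (1 - u) * det2 a b c + u * det2 a b d = 0 := by
    rw [← det2_combo a b c d (1 - u) u (by ring), ← hux, hgx]
  have hu0 : 0 < u ∧ u < 1 := by
    rcases mul_neg_iff.1 h2 with ⟨hc, hd⟩ | ⟨hc, hd⟩
    · constructor <;> nlinarith
    · constructor <;> nlinarith
  refine ⟨x, hxab, 1 - u, u, by linarith [hu0.2], hu0.1, by ring, hux.symm⟩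

lemma det_neg_of_segcross {a b c d : Pt} (h : SegCross a b c d)
    (ha : det2 c d a ≠ 0) (hb : det2 c d b ≠ 0)
    (hc : det2 a b c ≠ 0) (hd : det2 a b d ≠ 0) :
    det2 c d a * det2 c d b < 0 ∧ det2 a b c * det2 a b d < 0 := by
  obtain ⟨x, hx1, hx2⟩ := h
  obtain ⟨s, t, hs, ht, hst, hdet⟩ := det2_of_openSegment (c := c) (d := d) hx1
  have h0 : det2 c d x = 0 := det2_zero_of_openSegment hx2
  obtain ⟨s', t', hs', ht', hst', hdet'⟩ := det2_of_openSegment (c := a) (d := b) hx2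
  have h0' : det2 a b x = 0 := det2_zero_of_openSegment hx1
  constructor
  · rw [h0] at hdet
    rcases ha.lt_or_gt with h' | h'
    · have : 0 < det2 c d b := by nlinarith
      nlinarith
    · have : det2 c d b < 0 := by nlinarith
      nlinarith
  · rw [h0'] at hdet'
    rcases hc.lt_or_gt with h' | h'
    · have : 0 < det2 a b d := by nlinarith
      nlinarith
    · have : det2 a b d < 0 := by nlinarith
      nlinarith

lemma not_segcross_shared {a b c : Pt} (h : ¬ Collinear ℝ ({a, b, c} : Set Pt)) :
    ¬ SegCross a b a c := by
  rintro ⟨x, hx1, hx2⟩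
  have hab : a ≠ b := by rintro rfl; exact h (by simpa using collinear_pair ℝ a c)
  have hac : a ≠ c := by
    rintro rfl
    apply h
    rw [collinear_iff_of_mem (Set.mem_insert a {b, a})]
    refine ⟨b - a, ?_⟩
    intro q hq
    rcases hq with rfl | rfl | rfl
    · exact ⟨0, by simp⟩
    · exact ⟨1, by simp⟩
    · exact ⟨0, by simp⟩
  have h1 : det2 a b x = 0 := det2_zero_of_openSegment hx1
  have h2 : det2 a c x = 0 := det2_zero_of_openSegment hx2
  have hxa : a ≠ x := by
    rintro rfl
    exact hac (left_mem_openSegment_iff.1 hx2)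
  obtain ⟨r, hr⟩ := exists_param_of_det2 (a := a) (b := x) (c := b) hxa
    (by rw [det2_swap23, h1]; ring)
  obtain ⟨r', hr'⟩ := exists_param_of_det2 (a := a) (b := x) (c := c) hxa
    (by rw [det2_swap23, h2]; ring)
  apply h
  rw [collinear_iff_of_mem (Set.mem_insert a {b, c})]
  refine ⟨x - a, ?_⟩
  intro q hq
  rcases hq with rfl | rfl | rfl
  · exact ⟨0, by simp⟩
  · exact ⟨r, by rw [hr]; simp [add_comm]⟩
  · exact ⟨r', by rw [hr']; simp [add_comm]⟩

lemma segcross_swap_left {a b c d : Pt} (h : SegCross a b c d) : SegCross b a c d := by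
  obtain ⟨x, h1, h2⟩ := h
  exact ⟨x, by rwa [openSegment_symm], h2⟩

lemma segcross_swap_right {a b c d : Pt} (h : SegCross a b c d) : SegCross a b d c := by
  obtain ⟨x, h1, h2⟩ := h
  exact ⟨x, h1, by rwa [openSegment_symm]⟩

lemma segcross_comm {a b c d : Pt} (h : SegCross a b c d) : SegCross c d a b := by
  obtain ⟨x, h1, h2⟩ := h
  exact ⟨x, h2, h1⟩


open Finset

/-- barycentric membership -/
lemma mem_triangle_hull {a b c q : Pt} (hD : 0 < det2 a b c)
    (h1 : 0 ≤ det2 a b q) (h2 : 0 ≤ det2 a q c) (h3 : 0 ≤ det2 q b c) :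
    q ∈ convexHull ℝ ({a, b, c} : Set Pt) := by
  set D := det2 a b c with hDdef
  set la := det2 q b c with hla
  set lb := det2 a q c with hlb
  set lc := det2 a b q with hlc
  have hsum : la + lb + lc = D := by
    simp only [hla, hlb, hlc, hDdef, det2]; ring
  have hq1 : D * q.1 = la * a.1 + lb * b.1 + lc * c.1 := by
    simp only [hla, hlb, hlc, hDdef, det2]; ring
  have hq2 : D * q.2 = la * a.2 + lb * b.2 + lc * c.2 := by
    simp only [hla, hlb, hlc, hDdef, det2]; ring
  have hD0 : D ≠ 0 := ne_of_gt hD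
  by_cases hbc : lb + lc = 0
  · -- q = a
    have hlb0 : lb = 0 := by linarith
    have hlc0 : lc = 0 := by linarith
    have hlaD : la = D := by linarith
    have : q = a := by
      rw [hlb0, hlc0, hlaD] at hq1 hq2
      apply Prod.ext
      · apply mul_left_cancel₀ hD0; linarith
      · apply mul_left_cancel₀ hD0; linarith
    rw [this]
    exact subset_convexHull ℝ _ (Set.mem_insert a {b, c})
  · have hbcpos : 0 < lb + lc := lt_of_le_of_ne (by linarith) (Ne.symm hbc)
    set m : Pt := (lb / (lb + lc)) • b + (lc / (lb + lc)) • c with hmdef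
    have hm : m ∈ segment ℝ b c :=
      ⟨lb / (lb + lc), lc / (lb + lc), div_nonneg h2 (le_of_lt hbcpos),
        div_nonneg h1 (le_of_lt hbcpos), by field_simp, rfl⟩
    have hmhull : m ∈ convexHull ℝ ({a, b, c} : Set Pt) :=
      (convex_convexHull ℝ _).segment_subset
        (subset_convexHull ℝ _ (by simp)) (subset_convexHull ℝ _ (by simp)) hm
    have hahull : a ∈ convexHull ℝ ({a, b, c} : Set Pt) :=
      subset_convexHull ℝ _ (by simp)
    have hq : q ∈ segment ℝ a m := by
      refine ⟨la / D, (lb + lc) / D, div_nonneg h3 (le_of_lt hD),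
        div_nonneg (le_of_lt hbcpos) (le_of_lt hD), by field_simp; linarith, ?_⟩
      apply Prod.ext
      · simp only [Prod.fst_add, Prod.smul_fst, hmdef, smul_eq_mul]
        field_simp
        linear_combination -hq1
      · simp only [Prod.snd_add, Prod.smul_snd, hmdef, smul_eq_mul]
        field_simp
        linear_combination -hq2
    exact (convex_convexHull ℝ _).segment_subset hahull hmhull hq

lemma extreme_seg {A : Set Pt} {q x y : Pt} (hq : q ∈ Set.extremePoints ℝ A)
    (hx : x ∈ A) (hy : y ∈ A) (hseg : q ∈ segment ℝ x y) (hne : q ≠ x) : q = y := by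
  obtain ⟨s, t, hs, ht, hst, heq⟩ := hseg
  rcases eq_or_lt_of_le hs with hs0 | hs0
  · rw [← hs0] at heq hst
    simp only [zero_smul, zero_add] at heq hst
    rw [hst, one_smul] at heq
    exact heq.symm
  · rcases eq_or_lt_of_le ht with ht0 | ht0
    · exfalso
      rw [← ht0] at heq hst
      simp only [zero_smul, add_zero] at heq hst
      rw [hst, one_smul] at heq
      exact hne heq.symm
    · exfalso
      exact hne (hq.2 hx hy ⟨s, t, hs0, ht0, hst, heq⟩).symm

lemma extreme_not_in_triangle {S : Set Pt} {a b c q : Pt}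
    (ha : a ∈ S) (hb : b ∈ S) (hc : c ∈ S)
    (hq : q ∈ Set.extremePoints ℝ (convexHull ℝ S))
    (hqa : q ≠ a) (hqb : q ≠ b) (hqc : q ≠ c)
    (hmem : q ∈ convexHull ℝ ({a, b, c} : Set Pt)) : False := by
  have hbc : ({b, c} : Set Pt).Nonempty := ⟨b, by simp⟩
  rw [convexHull_insert hbc] at hmem
  obtain ⟨x', hx', z, hz, hqz⟩ := mem_convexJoin.1 hmem
  rw [Set.mem_singleton_iff] at hx'
  subst hx'
  rw [convexHull_pair] at hz
  have hzhull : z ∈ convexHull ℝ S :=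
    (convex_convexHull ℝ S).segment_subset (subset_convexHull ℝ S hb)
      (subset_convexHull ℝ S hc) hz
  have hqz' : q = z := extreme_seg hq (subset_convexHull ℝ S ha) hzhull hqz hqa
  rw [← hqz'] at hz
  exact hqc (extreme_seg hq (subset_convexHull ℝ S hb) (subset_convexHull ℝ S hc) hz hqb)

/-- Cramer-type identity -/
lemma det2_cramer (a x y z : Pt) :
    det2 a x y * (z.1 - a.1) + det2 a y z * (x.1 - a.1) = det2 a x z * (y.1 - a.1) := by
  simp only [det2]; ring

lemma exists_convex_order {n : ℕ} (p : Fin n → Pt) (hgen : GenPos p) (hconv : ConvexPos p)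
    (hn : 0 < n) :
    ∃ ord : Fin n → ℕ, Function.Injective ord ∧
      ∀ i j k : Fin n, ord i < ord j → ord j < ord k → 0 < det2 (p i) (p j) (p k) := by
  classical
  obtain ⟨hinj, hcol⟩ := hgen
  have hdet_ne : ∀ i j k : Fin n, i ≠ j → i ≠ k → j ≠ k → det2 (p i) (p j) (p k) ≠ 0 :=
    fun i j k hij hik hjk h =>
      hcol i j k hij hik hjk (collinear_of_det2 (fun he => hij (hinj he)) h)
  have hune : (Finset.univ : Finset (Fin n)).Nonempty := ⟨⟨0, hn⟩, Finset.mem_univ _⟩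
  obtain ⟨v, -, hv⟩ := Finset.exists_min_image Finset.univ (fun i => (p i).1) hune
  have hvx : ∀ j : Fin n, (p v).1 ≤ (p j).1 := fun j => hv j (Finset.mem_univ j)
  let Rlt : Fin n → Fin n → Prop := fun i j =>
    (i = v ∧ j ≠ v) ∨ (i ≠ v ∧ j ≠ v ∧ 0 < det2 (p v) (p i) (p j))
  have hirr : ∀ i, ¬ Rlt i i := by
    rintro i (⟨h1, h2⟩ | ⟨h1, h2, h3⟩)
    · exact h2 h1
    · have := det2_self23 (p v) (p i); linarith
  have htot : ∀ i j, i ≠ j → Rlt i j ∨ Rlt j i := by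
    intro i j hij
    by_cases hi : i = v
    · exact Or.inl (Or.inl ⟨hi, fun h => hij (hi.trans h.symm)⟩)
    by_cases hj : j = v
    · exact Or.inr (Or.inl ⟨hj, fun h => hij (h.trans hj.symm)⟩)
    have hne := hdet_ne v i j (Ne.symm hi) (Ne.symm hj) hij
    rcases hne.lt_or_gt with h | h
    · refine Or.inr (Or.inr ⟨hj, hi, ?_⟩)
      have := det2_swap23 (p v) (p i) (p j); linarith
    · exact Or.inl (Or.inr ⟨hi, hj, h⟩)
  have htrans : ∀ i j k, Rlt i j → Rlt j k → Rlt i k := by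
    rintro i j k (⟨hi, hj⟩ | ⟨hi, hj, hdij⟩) (⟨hj', hk⟩ | ⟨hj', hk, hdjk⟩)
    · exact absurd hj' hj
    · exact Or.inl ⟨hi, hk⟩
    · exact absurd hj' hj
    · refine Or.inr ⟨hi, hk, ?_⟩
      have hik : i ≠ k := by
        rintro rfl
        have := det2_swap23 (p v) (p i) (p j)
        linarith
      have hiv : v ≠ i := Ne.symm hi
      have hkv : v ≠ k := Ne.symm hk
      have hne := hdet_ne v i k hiv hkv hik
      rcases hne.lt_or_gt with hneg | hpos
      · exfalso
        have hid := det2_cramer (p v) (p i) (p j) (p k)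
        have hx1 : 0 ≤ (p i).1 - (p v).1 := by linarith [hvx i]
        have hx2 : 0 ≤ (p j).1 - (p v).1 := by linarith [hvx j]
        have hx3 : 0 ≤ (p k).1 - (p v).1 := by linarith [hvx k]
        have hz0 : (p k).1 - (p v).1 = 0 := by nlinarith
        have hx0 : (p i).1 - (p v).1 = 0 := by nlinarith
        have hzero : det2 (p v) (p i) (p k) = 0 := by
          simp only [det2]
          have e1 : (p i).1 = (p v).1 := by linarith
          have e2 : (p k).1 = (p v).1 := by linarith
          rw [e1, e2]; ring
        exact hneg.ne hzero
      · exact hpos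
  let ord : Fin n → ℕ := fun j => (Finset.univ.filter (fun i => Rlt i j)).card
  have hmono : ∀ i j, Rlt i j → ord i < ord j := by
    intro i j hij
    apply Finset.card_lt_card
    constructor
    · intro k hk
      simp only [Finset.mem_filter, Finset.mem_univ, true_and] at hk ⊢
      exact htrans k i j hk hij
    · intro hsub
      have := hsub (by simp only [Finset.mem_filter, Finset.mem_univ, true_and]; exact hij)
      simp only [Finset.mem_filter, Finset.mem_univ, true_and] at this
      exact hirr i this
  have hrefl : ∀ i j, ord i < ord j → Rlt i j := by
    intro i j h
    by_cases hij : i = j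
    · exact absurd (hij ▸ h) (lt_irrefl _)
    · rcases htot i j hij with h' | h'
      · exact h'
      · exact absurd h (not_lt.2 (le_of_lt (hmono j i h')))
  refine ⟨ord, ?_, ?_⟩
  · intro i j hij
    by_contra hne
    rcases htot i j hne with h | h
    · exact (hmono i j h).ne hij
    · exact (hmono j i h).ne hij.symm
  · intro i j k hij hjk
    have r1 := hrefl i j hij
    have r2 := hrefl j k hjk
    have hij' : i ≠ j := by rintro rfl; exact hirr i r1
    have hjk' : j ≠ k := by rintro rfl; exact hirr j r2
    have hik' : i ≠ k := by rintro rfl; exact hirr i (htrans i j i r1 r2)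
    rcases r1 with ⟨hi, hj⟩ | ⟨hi, hj, hdij⟩
    · rcases r2 with ⟨hj', hk⟩ | ⟨hj', hk, hdjk⟩
      · exact absurd hj' hj
      · rw [hi]; exact hdjk
    · rcases r2 with ⟨hj', hk⟩ | ⟨hj', hk, hdjk⟩
      · exact absurd hj' hj
      · rcases (htrans i j k (Or.inr ⟨hi, hj, hdij⟩) (Or.inr ⟨hj, hk, hdjk⟩)) with
          ⟨hc1, -⟩ | ⟨-, -, hdik⟩
        · exact absurd hc1 hi
        rcases (hdet_ne i j k hij' hik' hjk').lt_or_gt with hneg | hpos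
        · exfalso
          apply extreme_not_in_triangle (S := Set.range p) (a := p v) (b := p i)
            (c := p k) (q := p j) ⟨v, rfl⟩ ⟨i, rfl⟩ ⟨k, rfl⟩ (hconv j)
            (fun h => hj (hinj h)) (fun h => hij' (hinj h).symm) (fun h => hjk' (hinj h))
          apply mem_triangle_hull hdik (le_of_lt hdij) (le_of_lt hdjk)
          have := det2_swap12 (p i) (p j) (p k)
          linarith
        · exact hpos


open Finset
open scoped Classical

namespace CC

def Cross (e f : ℕ × ℕ) : Prop :=
  (e.1 < f.1 ∧ f.1 < e.2 ∧ e.2 < f.2) ∨ (f.1 < e.1 ∧ e.1 < f.2 ∧ f.2 < e.2)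

def Chord (s : Finset ℕ) (e : ℕ × ℕ) : Prop := e.1 ∈ s ∧ e.2 ∈ s ∧ e.1 < e.2

def Consec (s : Finset ℕ) (e : ℕ × ℕ) : Prop :=
  Chord s e ∧ ∀ z ∈ s, ¬ (e.1 < z ∧ z < e.2)

def Bnds (s : Finset ℕ) (e : ℕ × ℕ) : Prop :=
  Chord s e ∧ ∀ z ∈ s, e.1 ≤ z ∧ z ≤ e.2

def Hull (s : Finset ℕ) (e : ℕ × ℕ) : Prop := Consec s e ∨ Bnds s e

def Diag (s : Finset ℕ) (e : ℕ × ℕ) : Prop := Chord s e ∧ ¬ Hull s e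

def MaxFam (s : Finset ℕ) (T : Finset (ℕ × ℕ)) : Prop :=
  (∀ e ∈ T, Diag s e) ∧ (∀ e ∈ T, ∀ f ∈ T, ¬ Cross e f) ∧
  (∀ e, Diag s e → (∀ f ∈ T, ¬ Cross e f) → e ∈ T)

lemma cross_symm {e f : ℕ × ℕ} (h : Cross e f) : Cross f e := h.elim Or.inr Or.inl

lemma cross_irrefl (e : ℕ × ℕ) : ¬ Cross e e := by simp only [Cross]; omega

lemma hull_not_crossed {s : Finset ℕ} {e f : ℕ × ℕ} (he : Hull s e) (hf : Chord s f) :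
    ¬ Cross e f := by
  obtain ⟨hf1, hf2, hf12⟩ := hf
  rcases he with ⟨⟨he1, he2, he12⟩, hcon⟩ | ⟨⟨he1, he2, he12⟩, hbnd⟩
  · have h1 := hcon f.1 hf1
    have h2 := hcon f.2 hf2
    simp only [Cross]; omega
  · have h1 := hbnd f.1 hf1
    have h2 := hbnd f.2 hf2
    simp only [Cross]; omega

/-- a diagonal has a strict interior vertex and a strict exterior vertex -/
lemma diag_wit {s : Finset ℕ} {e : ℕ × ℕ} (h : Diag s e) :
    (∃ z ∈ s, e.1 < z ∧ z < e.2) ∧ (∃ w ∈ s, w < e.1 ∨ e.2 < w) := by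
  obtain ⟨hc, hnh⟩ := h
  constructor
  · by_contra hno
    push_neg at hno
    refine hnh (Or.inl ⟨hc, fun z hz hb => ?_⟩)
    have := hno z hz
    omega
  · by_contra hno
    push_neg at hno
    refine hnh (Or.inr ⟨hc, fun z hz => ?_⟩)
    have := hno z hz
    omega

lemma exists_next {s : Finset ℕ} {x : ℕ} (h : ∃ z ∈ s, x < z) :
    ∃ y ∈ s, x < y ∧ ∀ z ∈ s, x < z → y ≤ z := by
  have hne : (s.filter (fun z => x < z)).Nonempty := by
    obtain ⟨z, hz, hxz⟩ := h
    exact ⟨z, mem_filter.2 ⟨hz, hxz⟩⟩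
  refine ⟨(s.filter (fun z => x < z)).min' hne, ?_, ?_, ?_⟩
  · exact (mem_filter.1 (min'_mem _ hne)).1
  · exact (mem_filter.1 (min'_mem _ hne)).2
  · intro z hz hxz
    exact min'_le _ _ (mem_filter.2 ⟨hz, hxz⟩)

/-- separation: a chord inside [x,y] cannot cross a chord with both endpoints
outside the open interval (x,y) -/
lemma cross_sep {x y : ℕ} {e f : ℕ × ℕ} (he1 : x ≤ e.1) (he2 : e.2 ≤ y)
    (he : e.1 < e.2) (hf : f.1 < f.2)
    (hf1 : f.1 ≤ x ∨ y ≤ f.1) (hf2 : f.2 ≤ x ∨ y ≤ f.2) : ¬ Cross e f := by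
  simp only [Cross]; omega

lemma card_three_le {s : Finset ℕ} {a b c : ℕ} (ha : a ∈ s) (hb : b ∈ s) (hc : c ∈ s)
    (hab : a < b) (hbc : b < c) : 3 ≤ s.card := by
  have hsub : {a, b, c} ⊆ s := by
    intro z hz
    simp only [mem_insert, mem_singleton] at hz
    rcases hz with rfl | rfl | rfl <;> assumption
  have h3 : ({a, b, c} : Finset ℕ).card = 3 := by
    rw [card_insert_of_notMem (by simp; omega), card_insert_of_notMem (by simp; omega),
      card_singleton]
  have := card_le_card hsub
  omega

lemma cross_def {a b c d : ℕ} :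
    Cross (a, b) (c, d) ↔ ((a < c ∧ c < b ∧ b < d) ∨ (c < a ∧ a < d ∧ d < b)) := Iff.rfl

lemma cross_right {e : ℕ × ℕ} {c d : ℕ} :
    Cross e (c, d) ↔ ((e.1 < c ∧ c < e.2 ∧ e.2 < d) ∨ (c < e.1 ∧ e.1 < d ∧ d < e.2)) := Iff.rfl

lemma cross_left {a b : ℕ} {f : ℕ × ℕ} :
    Cross (a, b) f ↔ ((a < f.1 ∧ f.1 < b ∧ b < f.2) ∨ (f.1 < a ∧ a < f.2 ∧ f.2 < b)) := Iff.rfl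

theorem count_aux : ∀ N : ℕ, ∀ s : Finset ℕ, ∀ T : Finset (ℕ × ℕ), s.card ≤ N →
    3 ≤ s.card → MaxFam s T → T.card + 3 = s.card := by
  intro N
  induction N with
  | zero => intro s T h1 h2 _; omega
  | succ N ih =>
    intro s T hsN hs3 hmax
    obtain ⟨hdiag, hnc, hmx⟩ := hmax
    rcases T.eq_empty_or_nonempty with rfl | ⟨⟨x, y⟩, ht0⟩
    · -- show s.card = 3
      rcases lt_or_ge s.card 4 with h4 | h4
      · simp; omega
      · exfalso
        have hne : s.Nonempty := card_pos.1 (by omega)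
        set a := s.min' hne with hadef
        have ha : a ∈ s := min'_mem _ hne
        have hamin : ∀ z ∈ s, a ≤ z := fun z hz => min'_le _ _ hz
        have hex1 : ∃ z ∈ s, a < z := by
          by_contra hno
          push_neg at hno
          have hsub : s ⊆ {a} := fun z hz => by
            simp only [mem_singleton]
            have := hno z hz; have := hamin z hz; omega
          have := card_le_card hsub
          simp at this; omega
        obtain ⟨b, hb, hab, hbmin⟩ := exists_next hex1
        have hex2 : ∃ z ∈ s, b < z := by
          by_contra hno
          push_neg at hno
          have hsub : s ⊆ {a, b} := fun z hz => by
            simp only [mem_insert, mem_singleton]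
            have h1 := hno z hz; have h2 := hamin z hz
            rcases eq_or_lt_of_le h2 with h | h
            · left; omega
            · right; have := hbmin z hz h; omega
          have h5 := card_le_card hsub
          have h6 : ({a, b} : Finset ℕ).card ≤ 2 :=
            (card_insert_le _ _).trans (by simp)
          omega
        obtain ⟨c, hc, hbc, hcmin⟩ := exists_next hex2
        have hex3 : ∃ z ∈ s, c < z := by
          by_contra hno
          push_neg at hno
          have hsub : s ⊆ {a, b, c} := fun z hz => by
            simp only [mem_insert, mem_singleton]
            have h1 := hno z hz; have h2 := hamin z hz
            rcases eq_or_lt_of_le h2 with h | h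
            · left; omega
            have h3 := hbmin z hz h
            rcases eq_or_lt_of_le h3 with h' | h'
            · right; left; omega
            have h4 := hcmin z hz h'
            right; right; omega
          have h5 := card_le_card hsub
          have h6 : ({a, b, c} : Finset ℕ).card ≤ 3 := by
            apply (card_insert_le _ _).trans
            have := card_insert_le b ({c} : Finset ℕ)
            simp at this ⊢; omega
          omega
        obtain ⟨d, hd, hcd⟩ := hex3
        have hdiag_ac : Diag s (a, c) := by
          refine ⟨⟨ha, hc, by omega⟩, ?_⟩
          rintro (⟨-, hcon⟩ | ⟨-, hbnd⟩)
          · exact hcon b hb ⟨hab, hbc⟩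
          · have := (hbnd d hd).2; simp at this; omega
        exact absurd (hmx (a, c) hdiag_ac (by simp)) (notMem_empty _)
    · -- split along t0 = (x, y)
      have ht0diag := hdiag (x, y) ht0
      obtain ⟨⟨hx, hy, hxy⟩, -⟩ := ht0diag
      simp only at hx hy hxy
      obtain ⟨⟨z0, hz0, hz0x, hz0y⟩, ⟨w0, hw0, hw0o⟩⟩ := diag_wit (hdiag (x, y) ht0)
      simp only at hz0x hz0y hw0o
      set s1 := s.filter (fun z => x ≤ z ∧ z ≤ y) with hs1def
      set s2 := s.filter (fun z => z ≤ x ∨ y ≤ z) with hs2def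
      set T1 := (T.erase (x, y)).filter (fun e => x ≤ e.1 ∧ e.2 ≤ y) with hT1def
      set T2 := (T.erase (x, y)).filter (fun e => ¬ (x ≤ e.1 ∧ e.2 ≤ y)) with hT2def
      have hclass : ∀ e ∈ T.erase (x, y), (x ≤ e.1 ∧ e.2 ≤ y) ∨
          ((e.1 ≤ x ∨ y ≤ e.1) ∧ (e.2 ≤ x ∨ y ≤ e.2)) := by
        intro e he
        have hem := mem_of_mem_erase he
        have hene : e ≠ (x, y) := ne_of_mem_erase he
        have hecr : ¬ Cross e (x, y) := hnc e hem _ ht0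
        have hech : e.1 < e.2 := (hdiag e hem).1.2.2
        have hne' : e.1 ≠ x ∨ e.2 ≠ y := by
          by_contra hcon; push_neg at hcon
          exact hene (Prod.ext hcon.1 hcon.2)
        rw [cross_right] at hecr
        omega
      have hT1sub : ∀ e ∈ T1, e ∈ T ∧ e ≠ (x, y) ∧ x ≤ e.1 ∧ e.2 ≤ y := by
        intro e he
        rw [hT1def, mem_filter] at he
        exact ⟨mem_of_mem_erase he.1, ne_of_mem_erase he.1, he.2⟩
      have hT2sub : ∀ e ∈ T2, e ∈ T ∧ e ≠ (x, y) ∧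
          (e.1 ≤ x ∨ y ≤ e.1) ∧ (e.2 ≤ x ∨ y ≤ e.2) := by
        intro e he
        rw [hT2def, mem_filter] at he
        have := hclass e he.1
        exact ⟨mem_of_mem_erase he.1, ne_of_mem_erase he.1, by tauto⟩
      have hxs1 : x ∈ s1 := by rw [hs1def, mem_filter]; exact ⟨hx, by omega⟩
      have hys1 : y ∈ s1 := by rw [hs1def, mem_filter]; exact ⟨hy, by omega⟩
      have hxs2 : x ∈ s2 := by rw [hs2def, mem_filter]; exact ⟨hx, by omega⟩
      have hys2 : y ∈ s2 := by rw [hs2def, mem_filter]; exact ⟨hy, by omega⟩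
      have hz0s1 : z0 ∈ s1 := by rw [hs1def, mem_filter]; exact ⟨hz0, by omega⟩
      have hw0s2 : w0 ∈ s2 := by rw [hs2def, mem_filter]; exact ⟨hw0, by omega⟩
      -- T1 is maximal on s1
      have hmax1 : MaxFam s1 T1 := by
        refine ⟨?_, ?_, ?_⟩
        · intro e he
          obtain ⟨heT, hene, hein⟩ := hT1sub e he
          obtain ⟨⟨zi, hzi, hzi1, hzi2⟩, -⟩ := diag_wit (hdiag e heT)
          obtain ⟨⟨he1, he2, he12⟩, -⟩ := hdiag e heT
          refine ⟨⟨?_, ?_, he12⟩, ?_⟩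
          · rw [hs1def, mem_filter]; exact ⟨he1, by omega⟩
          · rw [hs1def, mem_filter]; exact ⟨he2, by omega⟩
          rintro (⟨-, hcon⟩ | ⟨-, hbnd⟩)
          · refine hcon zi ?_ ⟨hzi1, hzi2⟩
            rw [hs1def, mem_filter]; exact ⟨hzi, by omega⟩
          · have hne' : e.1 ≠ x ∨ e.2 ≠ y := by
              by_contra hcon; push_neg at hcon
              exact hene (Prod.ext hcon.1 hcon.2)
            have hbx := (hbnd x hxs1).1
            have hby := (hbnd y hys1).2
            omega
        · intro e he f hf
          exact hnc e (hT1sub e he).1 f (hT1sub f hf).1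
        · intro e hediag hecompat
          obtain ⟨⟨zi, hzi, hzi1, hzi2⟩, ⟨wi, hwi, hwio⟩⟩ := diag_wit hediag
          obtain ⟨⟨he1, he2, he12⟩, -⟩ := hediag
          rw [hs1def, mem_filter] at he1 he2 hzi hwi
          have hein : x ≤ e.1 ∧ e.2 ≤ y := ⟨he1.2.1, he2.2.2⟩
          have hes : Diag s e := by
            refine ⟨⟨he1.1, he2.1, he12⟩, ?_⟩
            rintro (⟨-, hcon⟩ | ⟨-, hbnd⟩)
            · exact hcon zi hzi.1 ⟨hzi1, hzi2⟩
            · have := hbnd wi hwi.1; omega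
          have heT : e ∈ T := by
            apply hmx e hes
            intro f hfT
            by_cases hft : f = (x, y)
            · subst hft
              rw [cross_right]; omega
            · rcases hclass f (mem_erase.2 ⟨hft, hfT⟩) with hfin | hfout
              · refine hecompat f ?_
                rw [hT1def, mem_filter]
                exact ⟨mem_erase.2 ⟨hft, hfT⟩, hfin⟩
              · exact cross_sep hein.1 hein.2 he12 ((hdiag f hfT).1.2.2) hfout.1 hfout.2
          rw [hT1def, mem_filter]
          refine ⟨mem_erase.2 ⟨?_, heT⟩, hein⟩
          rintro rfl
          simp only at hwio
          have := hwi.2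
          omega
      -- T2 is maximal on s2
      have hmax2 : MaxFam s2 T2 := by
        refine ⟨?_, ?_, ?_⟩
        · intro e he
          obtain ⟨heT, hene, heout1, heout2⟩ := hT2sub e he
          obtain ⟨⟨zi, hzi, hzi1, hzi2⟩, ⟨wi, hwi, hwio⟩⟩ := diag_wit (hdiag e heT)
          obtain ⟨⟨he1, he2, he12⟩, -⟩ := hdiag e heT
          have hne' : e.1 ≠ x ∨ e.2 ≠ y := by
            by_contra hcon; push_neg at hcon
            exact hene (Prod.ext hcon.1 hcon.2)
          refine ⟨⟨?_, ?_, he12⟩, ?_⟩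
          · rw [hs2def, mem_filter]; exact ⟨he1, by omega⟩
          · rw [hs2def, mem_filter]; exact ⟨he2, by omega⟩
          rintro (⟨-, hcon⟩ | ⟨-, hbnd⟩)
          · -- not consecutive in s2
            by_cases hzis : z0 < e.1 ∨ e.2 < z0 ∨ zi ≤ x ∨ y ≤ zi
            · -- either zi works or use x / y as interior witness
              rcases Decidable.em (zi ≤ x ∨ y ≤ zi) with hzio | hzio
              · refine hcon zi ?_ ⟨hzi1, hzi2⟩
                rw [hs2def, mem_filter]; exact ⟨hzi, hzio⟩
              · -- zi is strictly inside (x,y); then e straddles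
                push_neg at hzio
                have hstr : e.1 ≤ x ∧ y ≤ e.2 := by omega
                rcases eq_or_lt_of_le hstr.1 with hq | hq
                · -- e.1 = x, then e.2 > y, witness y
                  refine hcon y hys2 ?_
                  omega
                · refine hcon x hxs2 ?_
                  omega
            · push_neg at hzis
              have hstr : e.1 ≤ x ∧ y ≤ e.2 := by omega
              rcases eq_or_lt_of_le hstr.1 with hq | hq
              · refine hcon y hys2 ?_; omega
              · refine hcon x hxs2 ?_; omega
          · -- not bounds in s2
            rcases heout1 with h1 | h1
            · rcases heout2 with h2 | h2
              · have := (hbnd y hys2).2; omega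
              · -- straddle: wi outside [e.1,e.2], wi ∈ s2
                have hwis2 : wi ∈ s2 := by
                  rw [hs2def, mem_filter]; exact ⟨hwi, by omega⟩
                have := hbnd wi hwis2; omega
            · have := (hbnd x hxs2).1; omega
        · intro e he f hf
          exact hnc e (hT2sub e he).1 f (hT2sub f hf).1
        · intro e hediag hecompat
          obtain ⟨⟨zi, hzi, hzi1, hzi2⟩, ⟨wi, hwi, hwio⟩⟩ := diag_wit hediag
          obtain ⟨⟨he1, he2, he12⟩, -⟩ := hediag
          rw [hs2def, mem_filter] at he1 he2 hzi hwi
          have hes : Diag s e := by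
            refine ⟨⟨he1.1, he2.1, he12⟩, ?_⟩
            rintro (⟨-, hcon⟩ | ⟨-, hbnd⟩)
            · exact hcon zi hzi.1 ⟨hzi1, hzi2⟩
            · have := hbnd wi hwi.1; omega
          have heT : e ∈ T := by
            apply hmx e hes
            intro f hfT
            by_cases hft : f = (x, y)
            · subst hft
              have h1 := he1.2
              have h2 := he2.2
              rw [cross_right]; omega
            · rcases hclass f (mem_erase.2 ⟨hft, hfT⟩) with hfin | hfout
              · intro hcr
                exact cross_sep hfin.1 hfin.2 ((hdiag f hfT).1.2.2) he12 he1.2 he2.2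
                  (cross_symm hcr)
              · refine hecompat f ?_
                rw [hT2def, mem_filter]
                refine ⟨mem_erase.2 ⟨hft, hfT⟩, ?_⟩
                have hf12 : f.1 < f.2 := (hdiag f hfT).1.2.2
                have hfne : f.1 ≠ x ∨ f.2 ≠ y := by
                  by_contra hcon; push_neg at hcon
                  exact hft (Prod.ext hcon.1 hcon.2)
                push_neg
                intro h1
                rcases hfout.1 with h3 | h3 <;> rcases hfout.2 with h2 | h2 <;> omega
          rw [hT2def, mem_filter]
          refine ⟨mem_erase.2 ⟨?_, heT⟩, ?_⟩
          · rintro rfl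
            simp only at hzi1 hzi2
            have := hzi.2
            omega
          · push_neg
            intro h1
            have h2 := he1.2
            have h3 := he2.2
            -- e ≠ (x,y)
            have hene : e ≠ (x, y) := by
              rintro rfl
              simp only at hzi1 hzi2
              have := hzi.2; omega
            have hne' : e.1 ≠ x ∨ e.2 ≠ y := by
              by_contra hcon; push_neg at hcon
              exact hene (Prod.ext hcon.1 hcon.2)
            omega
      -- cardinalities
      have hs1sub : s1 ⊆ s := filter_subset _ _
      have hs2sub : s2 ⊆ s := filter_subset _ _
      have hs1card : 3 ≤ s1.card := card_three_le hxs1 hz0s1 hys1 hz0x hz0y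
      have hs2card : 3 ≤ s2.card := by
        rcases hw0o with h | h
        · exact card_three_le hw0s2 hxs2 hys2 h hxy
        · exact card_three_le hxs2 hys2 hw0s2 hxy h
      have hs1lt : s1.card < s.card := by
        apply card_lt_card
        refine ⟨hs1sub, fun hsub => ?_⟩
        have := hsub hw0
        rw [hs1def, mem_filter] at this
        omega
      have hs2lt : s2.card < s.card := by
        apply card_lt_card
        refine ⟨hs2sub, fun hsub => ?_⟩
        have := hsub hz0
        rw [hs2def, mem_filter] at this
        omega
      have ih1 := ih s1 T1 (by omega) hs1card hmax1
      have ih2 := ih s2 T2 (by omega) hs2card hmax2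
      -- card s1 + card s2 = card s + 2
      have hcup : s1 ∪ s2 = s := by
        apply Finset.Subset.antisymm
        · intro z hz
          rcases mem_union.1 hz with h | h
          · exact hs1sub h
          · exact hs2sub h
        · intro z hz
          rcases le_or_gt z x with h | h
          · exact mem_union_right _ (by rw [hs2def, mem_filter]; exact ⟨hz, Or.inl h⟩)
          rcases le_or_gt z y with h' | h'
          · exact mem_union_left _ (by rw [hs1def, mem_filter]; exact ⟨hz, by omega⟩)
          · exact mem_union_right _ (by rw [hs2def, mem_filter]; exact ⟨hz, by omega⟩)
      have hcap : s1 ∩ s2 = {x, y} := by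
        apply Finset.Subset.antisymm
        · intro z hz
          rw [mem_inter, hs1def, hs2def, mem_filter, mem_filter] at hz
          simp only [mem_insert, mem_singleton]
          omega
        · intro z hz
          simp only [mem_insert, mem_singleton] at hz
          rcases hz with rfl | rfl
          · exact mem_inter.2 ⟨hxs1, hxs2⟩
          · exact mem_inter.2 ⟨hys1, hys2⟩
      have hcard12 : s1.card + s2.card = s.card + 2 := by
        have := Finset.card_union_add_card_inter s1 s2
        rw [hcup, hcap] at this
        have hxy2 : ({x, y} : Finset ℕ).card = 2 := by
          rw [card_insert_of_notMem (by simp; omega), card_singleton]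
        omega
      -- T cards
      have hTerase : T1.card + T2.card = (T.erase (x, y)).card := by
        rw [hT1def, hT2def]
        exact card_filter_add_card_filter_not _
      have hTcard : T.card = T1.card + T2.card + 1 := by
        have := card_erase_add_one ht0
        omega
      omega
lemma extend_to_max (s : Finset ℕ) :
    ∀ k : ℕ, ∀ F : Finset (ℕ × ℕ), (∀ e ∈ F, Diag s e) → (∀ e ∈ F, ∀ f ∈ F, ¬ Cross e f) →
    ((s ×ˢ s).filter (fun e => Diag s e)).card ≤ k + F.card →
    ∃ T, F ⊆ T ∧ MaxFam s T := by
  intro k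
  induction k with
  | zero =>
    intro F hdiag hnc hcard
    have hsub : F ⊆ (s ×ˢ s).filter (fun e => Diag s e) := by
      intro e he
      rw [mem_filter, mem_product]
      exact ⟨⟨(hdiag e he).1.1, (hdiag e he).1.2.1⟩, hdiag e he⟩
    have heq : F = (s ×ˢ s).filter (fun e => Diag s e) :=
      eq_of_subset_of_card_le hsub (by omega)
    refine ⟨F, Finset.Subset.refl F, hdiag, hnc, ?_⟩
    intro e he _
    rw [heq, mem_filter, mem_product]
    exact ⟨⟨he.1.1, he.1.2.1⟩, he⟩
  | succ k ih =>
    intro F hdiag hnc hcard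
    by_cases hm : ∀ e, Diag s e → (∀ f ∈ F, ¬ Cross e f) → e ∈ F
    · exact ⟨F, Finset.Subset.refl F, hdiag, hnc, hm⟩
    · push_neg at hm
      obtain ⟨e, hediag, hecompat, henot⟩ := hm
      have hsub : insert e F ⊆ (s ×ˢ s).filter (fun e => Diag s e) := by
        intro g hg
        rw [mem_filter, mem_product]
        rcases mem_insert.1 hg with rfl | hg'
        · exact ⟨⟨hediag.1.1, hediag.1.2.1⟩, hediag⟩
        · exact ⟨⟨(hdiag g hg').1.1, (hdiag g hg').1.2.1⟩, hdiag g hg'⟩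
      have hd' : ∀ g ∈ insert e F, Diag s g := by
        intro g hg
        rcases mem_insert.1 hg with rfl | hg'
        · exact hediag
        · exact hdiag g hg'
      have hnc' : ∀ g ∈ insert e F, ∀ f ∈ insert e F, ¬ Cross g f := by
        intro g hg f hf
        rcases mem_insert.1 hg with rfl | hg' <;> rcases mem_insert.1 hf with rfl | hf'
        · exact cross_irrefl _
        · exact hecompat f hf'
        · exact fun hc => hecompat g hg' (cross_symm hc)
        · exact hnc g hg' f hf'
      have hcard' : ((s ×ˢ s).filter (fun e => Diag s e)).card ≤ k + (insert e F).card := by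
        have h1 : (insert e F).card = F.card + 1 := card_insert_of_notMem henot
        omega
      obtain ⟨T, hFT, hmax⟩ := ih (insert e F) hd' hnc' hcard'
      exact ⟨T, fun g hg => hFT (mem_insert_of_mem hg), hmax⟩

lemma family_card_le {s : Finset ℕ} {F : Finset (ℕ × ℕ)} (hs3 : 3 ≤ s.card)
    (hdiag : ∀ e ∈ F, Diag s e) (hnc : ∀ e ∈ F, ∀ f ∈ F, ¬ Cross e f) :
    F.card + 3 ≤ s.card := by
  obtain ⟨T, hFT, hmax⟩ := extend_to_max s ((s ×ˢ s).filter (fun e => Diag s e)).card F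
    hdiag hnc (by omega)
  have := count_aux s.card s T (le_refl _) hs3 hmax
  have := card_le_card hFT
  omega

lemma nonmax_addable {s : Finset ℕ} {F : Finset (ℕ × ℕ)} (hs3 : 3 ≤ s.card)
    (hdiag : ∀ e ∈ F, Diag s e) (hnc : ∀ e ∈ F, ∀ f ∈ F, ¬ Cross e f)
    (hlt : F.card + 3 < s.card) :
    ∃ e, Diag s e ∧ e ∉ F ∧ ∀ f ∈ F, ¬ Cross e f := by
  by_contra hno
  push_neg at hno
  have hmax : MaxFam s F := by
    refine ⟨hdiag, hnc, ?_⟩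
    intro e he hc
    by_contra hnotin
    obtain ⟨f, hf, hcf⟩ := hno e he hnotin
    exact hc f hf hcf
  have := count_aux s.card s F (le_refl _) hs3 hmax
  omega

/-- InTH : in the family or on the hull -/
def InTH (s : Finset ℕ) (T : Finset (ℕ × ℕ)) (e : ℕ × ℕ) : Prop := e ∈ T ∨ Hull s e

lemma inth_not_crossed {s : Finset ℕ} {T : Finset (ℕ × ℕ)} (hmax : MaxFam s T)
    {e f : ℕ × ℕ} (he : InTH s T e) (hf : f ∈ T) : ¬ Cross e f := by
  rcases he with he | he
  · exact hmax.2.1 e he f hf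
  · exact hull_not_crossed he (hmax.1 f hf).1

lemma apex_inside {s : Finset ℕ} {T : Finset (ℕ × ℕ)} (hmax : MaxFam s T)
    {x y : ℕ} (ht : (x, y) ∈ T) :
    ∃ z ∈ s, x < z ∧ z < y ∧ InTH s T (x, z) ∧ InTH s T (z, y) := by
  obtain ⟨hdiag, hnc, hmx⟩ := hmax
  obtain ⟨⟨hx, hy, hxy⟩, -⟩ := hdiag (x, y) ht
  simp only at hx hy hxy
  obtain ⟨⟨z0, hz0, hz0x, hz0y⟩, -⟩ := diag_wit (hdiag (x, y) ht)
  simp only at hz0x hz0y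
  -- W : interior vertices z with (x, z) ∈ T ∪ hull
  set W := (s.filter (fun z => x < z ∧ z < y)).filter
    (fun z => InTH s T (x, z)) with hWdef
  have hWne : W.Nonempty := by
    obtain ⟨m, hm, hxm, hmmin⟩ := exists_next (x := x) ⟨z0, hz0, hz0x⟩
    have hmy : m < y := by have := hmmin z0 hz0 hz0x; omega
    refine ⟨m, ?_⟩
    rw [hWdef, mem_filter, mem_filter]
    refine ⟨⟨hm, hxm, hmy⟩, Or.inr (Or.inl ⟨⟨hx, hm, hxm⟩, ?_⟩)⟩
    intro z hz hb
    simp only at hb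
    exact absurd (hmmin z hz hb.1) (by omega)
  set v := W.max' hWne with hvdef
  have hvW : v ∈ W := W.max'_mem hWne
  obtain ⟨hv1, hvin⟩ := mem_filter.1 hvW
  obtain ⟨hvs, hxv, hvy⟩ := mem_filter.1 hv1
  refine ⟨v, hvs, hxv, hvy, hvin, ?_⟩
  by_contra hnot
  -- (v, y) is a diagonal of s not in T, so it crosses some f ∈ T
  have hdvy : Diag s (v, y) := by
    refine ⟨⟨hvs, hy, hvy⟩, ?_⟩
    rintro (hcon | ⟨-, hbnd⟩)
    · exact hnot (Or.inr (Or.inl hcon))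
    · have := (hbnd x hx).1; simp only at this; omega
  have : (v, y) ∉ T := fun h => hnot (Or.inl h)
  have hcr : ∃ f ∈ T, Cross (v, y) f := by
    by_contra hno
    push_neg at hno
    exact this (hmx (v, y) hdvy hno)
  obtain ⟨f, hfT, hcrf⟩ := hcr
  have hf12 : f.1 < f.2 := (hdiag f hfT).1.2.2
  have hfncr : ¬ Cross f (x, y) := hnc f hfT (x, y) ht
  rw [cross_left] at hcrf
  rw [cross_right] at hfncr
  -- f has an endpoint strictly inside (v, y) ⊆ (x, y), so f ⊆ [x, y]
  have hfin : x ≤ f.1 ∧ f.2 ≤ y := by omega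
  rcases hcrf with ⟨h1, h2, h3⟩ | ⟨h1, h2, h3⟩
  · omega
  · -- f.1 < v < f.2 < y
    rcases eq_or_lt_of_le hfin.1 with hq | hq
    · -- f.1 = x : f = (x, f.2) with v < f.2 < y contradicts maximality of v
      have hfW : f.2 ∈ W := by
        refine mem_filter.2 ⟨mem_filter.2 ⟨(hdiag f hfT).1.2.1, by omega, by omega⟩, Or.inl ?_⟩
        have heq2 : f = (x, f.2) := Prod.ext (by omega) rfl
        rwa [← heq2]
      have hle : f.2 ≤ v := W.le_max' f.2 hfW
      omega
    · -- x < f.1 : f crosses (x, v) ∈ T ∪ hull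
      have : Cross (x, v) f := by rw [cross_left]; omega
      exact inth_not_crossed ⟨hdiag, hnc, hmx⟩ hvin hfT this

lemma apex_outside {s : Finset ℕ} {T : Finset (ℕ × ℕ)} (hmax : MaxFam s T)
    {x y : ℕ} (ht : (x, y) ∈ T) :
    ∃ w ∈ s, (w < x ∧ InTH s T (w, x) ∧ InTH s T (w, y)) ∨
      (y < w ∧ InTH s T (x, w) ∧ InTH s T (y, w)) := by
  obtain ⟨hdiag, hnc, hmx⟩ := hmax
  obtain ⟨⟨hx, hy, hxy⟩, -⟩ := hdiag (x, y) ht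
  simp only at hx hy hxy
  obtain ⟨-, ⟨w0, hw0, hw0o⟩⟩ := diag_wit (hdiag (x, y) ht)
  simp only at hw0o
  set W := (s.filter (fun w => w < x ∨ y < w)).filter
    (fun w => InTH s T (if w < x then (w, y) else (y, w))) with hWdef
  have hWne : W.Nonempty := by
    by_cases hex : ∃ z ∈ s, y < z
    · obtain ⟨m, hm, hym, hmmin⟩ := exists_next hex
      refine ⟨m, ?_⟩
      rw [hWdef, mem_filter, mem_filter]
      have hnx : ¬ m < x := by omega
      rw [if_neg hnx]
      refine ⟨⟨hm, Or.inr hym⟩, Or.inr (Or.inl ⟨⟨hy, hm, hym⟩, ?_⟩)⟩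
      intro z hz hb
      simp only at hb
      exact absurd (hmmin z hz hb.1) (by omega)
    · -- no vertex above y; w0 < x; (min s, y) is a Bnds hull edge
      push_neg at hex
      have hne : s.Nonempty := ⟨x, hx⟩
      set a := s.min' hne with hadef
      have ha : a ∈ s := s.min'_mem hne
      have hamin : ∀ z ∈ s, a ≤ z := fun z hz => s.min'_le z hz
      have hw0x : w0 < x := by have := hex w0 hw0; omega
      have hax : a < x := by have := hamin w0 hw0; omega
      refine ⟨a, ?_⟩
      rw [hWdef, mem_filter, mem_filter, if_pos hax]
      refine ⟨⟨ha, Or.inl hax⟩, Or.inr (Or.inr ⟨⟨ha, hy, by omega⟩, ?_⟩)⟩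
      intro z hz
      simp only
      exact ⟨hamin z hz, hex z hz⟩
  -- pick w* : prefer the maximum of W ∩ (< x), else maximum of W
  by_cases hW1 : (W.filter (fun w => w < x)).Nonempty
  · set w := (W.filter (fun w => w < x)).max' hW1 with hwdef
    have hwW : w ∈ W.filter (fun w => w < x) := (W.filter (fun w => w < x)).max'_mem hW1
    obtain ⟨hwW', hwx⟩ := mem_filter.1 hwW
    obtain ⟨hw1, hwin⟩ := mem_filter.1 hwW'
    obtain ⟨hws, -⟩ := mem_filter.1 hw1
    rw [if_pos hwx] at hwin
    refine ⟨w, hws, Or.inl ⟨hwx, ?_, hwin⟩⟩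
    -- show (w, x) ∈ T ∪ hull
    by_contra hnot
    have hdwx : Diag s (w, x) := by
      refine ⟨⟨hws, hx, hwx⟩, ?_⟩
      rintro (hcon | ⟨-, hbnd⟩)
      · exact hnot (Or.inr (Or.inl hcon))
      · have := (hbnd y hy).2; simp only at this; omega
    have hwxT : (w, x) ∉ T := fun h => hnot (Or.inl h)
    have hcr : ∃ f ∈ T, Cross (w, x) f := by
      by_contra hno
      push_neg at hno
      exact hwxT (hmx (w, x) hdwx hno)
    obtain ⟨f, hfT, hcrf⟩ := hcr
    have hf12 : f.1 < f.2 := (hdiag f hfT).1.2.2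
    rw [cross_left] at hcrf
    rcases hcrf with ⟨h1, h2, h3⟩ | ⟨h1, h2, h3⟩
    · -- w < f.1 < x < f.2
      rcases lt_trichotomy f.2 y with hv | hv | hv
      · -- f crosses (x, y)
        have : Cross f (x, y) := by rw [cross_right]; omega
        exact hnc f hfT (x, y) ht this
      · -- f = (f.1, y) with f.1 < x : contradicts maximality of w
        have hfW : f.1 ∈ W.filter (fun w => w < x) := by
          refine mem_filter.2 ⟨mem_filter.2 ⟨mem_filter.2 ⟨(hdiag f hfT).1.1, Or.inl h2⟩, ?_⟩, h2⟩
          rw [if_pos h2]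
          refine Or.inl ?_
          have heq2 : f = (f.1, y) := Prod.ext rfl (by omega)
          rwa [← heq2]
        have hle : f.1 ≤ w := (W.filter (fun w => w < x)).le_max' f.1 hfW
        omega
      · -- f crosses (w, y)
        have : Cross (w, y) f := by rw [cross_left]; omega
        exact inth_not_crossed ⟨hdiag, hnc, hmx⟩ hwin hfT this
    · -- f.1 < w < f.2 < x : f crosses (w, y)
      have : Cross (w, y) f := by rw [cross_left]; omega
      exact inth_not_crossed ⟨hdiag, hnc, hmx⟩ hwin hfT this
  · -- all of W is above y
    set w := W.max' hWne with hwdef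
    have hwW : w ∈ W := W.max'_mem hWne
    have hwnx : ¬ w < x := by
      intro h
      exact hW1 ⟨w, mem_filter.2 ⟨hwW, h⟩⟩
    obtain ⟨hw1, hwin⟩ := mem_filter.1 hwW
    obtain ⟨hws, hwo⟩ := mem_filter.1 hw1
    rw [if_neg hwnx] at hwin
    have hyw : y < w := by rcases hwo with h | h; omega; exact h
    refine ⟨w, hws, Or.inr ⟨hyw, ?_, hwin⟩⟩
    -- show (x, w) ∈ T ∪ hull
    by_contra hnot
    by_cases hbnds : Bnds s (x, w)
    · exact hnot (Or.inr (Or.inr hbnds))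
    have hdxw : Diag s (x, w) := by
      refine ⟨⟨hx, hws, by omega⟩, ?_⟩
      rintro (⟨-, hcon⟩ | hb)
      · exact hcon y hy (by simp only; omega)
      · exact hbnds hb
    have hxwT : (x, w) ∉ T := fun h => hnot (Or.inl h)
    have hcr : ∃ f ∈ T, Cross (x, w) f := by
      by_contra hno
      push_neg at hno
      exact hxwT (hmx (x, w) hdxw hno)
    obtain ⟨f, hfT, hcrf⟩ := hcr
    have hf12 : f.1 < f.2 := (hdiag f hfT).1.2.2
    rw [cross_left] at hcrf
    rcases hcrf with ⟨h1, h2, h3⟩ | ⟨h1, h2, h3⟩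
    · -- x < f.1 < w < f.2
      rcases lt_trichotomy f.1 y with hu | hu | hu
      · have : Cross (x, y) f := by rw [cross_left]; omega
        exact hnc (x, y) ht f hfT this
      · -- f = (y, f.2), f.2 > w : contradicts maximality of w
        have hfW : f.2 ∈ W := by
          have hnx2 : ¬ f.2 < x := by omega
          refine mem_filter.2 ⟨mem_filter.2 ⟨(hdiag f hfT).1.2.1, Or.inr (by omega)⟩, ?_⟩
          rw [if_neg hnx2]
          refine Or.inl ?_
          have heq2 : f = (y, f.2) := Prod.ext (by omega) rfl
          rwa [← heq2]
        have hle : f.2 ≤ w := W.le_max' f.2 hfW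
        omega
      · have : Cross (y, w) f := by rw [cross_left]; omega
        exact inth_not_crossed ⟨hdiag, hnc, hmx⟩ hwin hfT this
    · -- f.1 < x < f.2 < w
      rcases lt_trichotomy f.2 y with hv | hv | hv
      · have : Cross f (x, y) := by rw [cross_right]; omega
        exact hnc f hfT (x, y) ht this
      · -- f = (f.1, y), f.1 < x : then W ∩ (< x) nonempty, contradiction
        have hfW : f.1 ∈ W.filter (fun w => w < x) := by
          refine mem_filter.2 ⟨mem_filter.2 ⟨mem_filter.2 ⟨(hdiag f hfT).1.1, Or.inl h1⟩, ?_⟩, h1⟩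
          rw [if_pos h1]
          refine Or.inl ?_
          have heq2 : f = (f.1, y) := Prod.ext rfl (by omega)
          rwa [← heq2]
        exact hW1 ⟨f.1, hfW⟩
      · have : Cross (y, w) f := by rw [cross_left]; omega
        exact inth_not_crossed ⟨hdiag, hnc, hmx⟩ hwin hfT this

lemma quad1 {a b c d u v : ℕ} (h1 : a < b) (h2 : b < c) (h3 : c < d) (huv : u < v)
    (hne : ¬ (u = b ∧ v = d)) (hcr : Cross (a, c) (u, v)) :
    Cross (a, b) (u, v) ∨ Cross (b, c) (u, v) ∨ Cross (c, d) (u, v) ∨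
      Cross (a, d) (u, v) ∨ Cross (b, d) (u, v) := by
  simp only [cross_def] at *
  omega

lemma quad2 {a b c d u v : ℕ} (h1 : a < b) (h2 : b < c) (h3 : c < d) (huv : u < v)
    (hne : ¬ (u = a ∧ v = c)) (hcr : Cross (b, d) (u, v)) :
    Cross (a, b) (u, v) ∨ Cross (b, c) (u, v) ∨ Cross (c, d) (u, v) ∨
      Cross (a, d) (u, v) ∨ Cross (a, c) (u, v) := by
  simp only [cross_def] at *
  omega

lemma flip {s : Finset ℕ} {T : Finset (ℕ × ℕ)} (hmax : MaxFam s T)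
    {x y : ℕ} (ht : (x, y) ∈ T) :
    ∃ d : ℕ × ℕ, Diag s d ∧ Cross (x, y) d ∧ ∀ f ∈ T, f ≠ (x, y) → ¬ Cross d f := by
  obtain ⟨z, hzs, hxz, hzy, hz1, hz2⟩ := apex_inside hmax ht
  obtain ⟨w, hws, hw⟩ := apex_outside hmax ht
  have hys : y ∈ s := (hmax.1 (x, y) ht).1.2.1
  have hxs : x ∈ s := (hmax.1 (x, y) ht).1.1
  rcases hw with ⟨hwx, hwx1, hwy1⟩ | ⟨hyw, hxw1, hyw1⟩
  · -- quad (w, x, z, y); d := (w, z)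
    refine ⟨(w, z), ⟨⟨hws, hzs, by omega⟩, ?_⟩, ?_, ?_⟩
    · rintro (⟨-, hcon⟩ | ⟨-, hbnd⟩)
      · exact hcon x hxs (by simp only; omega)
      · have := (hbnd y hys).2; simp only at this; omega
    · rw [cross_def]; omega
    · intro f hfT hfne hcrf
      have hf12 : f.1 < f.2 := (hmax.1 f hfT).1.2.2
      have hchord : Chord s f := (hmax.1 f hfT).1
      have : f = (f.1, f.2) := rfl
      rw [this] at hcrf
      have hfnexy : ¬ (f.1 = x ∧ f.2 = y) := by
        intro hcon
        exact hfne (Prod.ext hcon.1 hcon.2)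
      rcases quad1 hwx hxz hzy hf12 hfnexy hcrf with hc | hc | hc | hc | hc
      · exact inth_not_crossed hmax hwx1 hfT (by rw [← this] at hc; exact hc)
      · exact inth_not_crossed hmax hz1 hfT (by rw [← this] at hc; exact hc)
      · exact inth_not_crossed hmax hz2 hfT (by rw [← this] at hc; exact hc)
      · exact inth_not_crossed hmax hwy1 hfT (by rw [← this] at hc; exact hc)
      · exact hmax.2.1 (x, y) ht f hfT (by rw [← this] at hc; exact hc)
  · -- quad (x, z, y, w); d := (z, w)
    refine ⟨(z, w), ⟨⟨hzs, hws, by omega⟩, ?_⟩, ?_, ?_⟩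
    · rintro (⟨-, hcon⟩ | ⟨-, hbnd⟩)
      · exact hcon y hys (by simp only; omega)
      · have := (hbnd x hxs).1; simp only at this; omega
    · rw [cross_def]; omega
    · intro f hfT hfne hcrf
      have hf12 : f.1 < f.2 := (hmax.1 f hfT).1.2.2
      have : f = (f.1, f.2) := rfl
      rw [this] at hcrf
      have hfnexy : ¬ (f.1 = x ∧ f.2 = y) := by
        intro hcon
        exact hfne (Prod.ext hcon.1 hcon.2)
      rcases quad2 hxz hzy hyw hf12 hfnexy hcrf with hc | hc | hc | hc | hc
      · exact inth_not_crossed hmax hz1 hfT (by rw [← this] at hc; exact hc)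
      · exact inth_not_crossed hmax hz2 hfT (by rw [← this] at hc; exact hc)
      · exact inth_not_crossed hmax hyw1 hfT (by rw [← this] at hc; exact hc)
      · exact inth_not_crossed hmax hxw1 hfT (by rw [← this] at hc; exact hc)
      · exact hmax.2.1 (x, y) ht f hfT (by rw [← this] at hc; exact hc)

lemma consec_card {s : Finset ℕ} (hne : s.Nonempty) :
    ((s ×ˢ s).filter (fun e => Consec s e)).card + 1 = s.card := by
  classical
  set M := s.max' hne with hMdef
  have hM : M ∈ s := s.max'_mem hne
  have hkey : ((s ×ˢ s).filter (fun e => Consec s e)).card = (s.erase M).card := by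
    apply Finset.card_bij (fun e _ => e.1)
    · intro e he
      rw [mem_filter] at he
      obtain ⟨-, ⟨he1, he2, he12⟩, -⟩ := he
      apply mem_erase.2
      refine ⟨?_, he1⟩
      intro hcon
      have := s.le_max' e.2 he2
      rw [← hMdef] at this
      omega
    · intro e he f hf h
      rw [mem_filter] at he hf
      obtain ⟨-, ⟨he1, he2, he12⟩, hecon⟩ := he
      obtain ⟨-, ⟨hf1, hf2, hf12⟩, hfcon⟩ := hf
      have h1 : ¬ (e.1 < f.2 ∧ f.2 < e.2) := hecon f.2 hf2
      have h2 : ¬ (f.1 < e.2 ∧ e.2 < f.2) := hfcon e.2 he2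
      apply Prod.ext h
      omega
    · intro z hz
      rw [mem_erase] at hz
      have hzM : z < M := lt_of_le_of_ne (s.le_max' z hz.2) hz.1
      obtain ⟨m, hm, hzm, hmmin⟩ := exists_next (x := z) ⟨M, hM, hzM⟩
      refine ⟨(z, m), ?_, rfl⟩
      rw [mem_filter, mem_product]
      refine ⟨⟨hz.2, hm⟩, ⟨hz.2, hm, hzm⟩, ?_⟩
      intro u hu hb
      simp only at hb
      exact absurd (hmmin u hu hb.1) (by omega)
  have h2 := card_erase_add_one hM
  omega

lemma bnds_eq {s : Finset ℕ} (hne : s.Nonempty) {e : ℕ × ℕ} (h : Bnds s e) :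
    e = (s.min' hne, s.max' hne) := by
  obtain ⟨⟨he1, he2, he12⟩, hb⟩ := h
  apply Prod.ext
  · exact le_antisymm ((hb (s.min' hne) (s.min'_mem hne)).1) (s.min'_le e.1 he1) |>.symm ▸ rfl
  · exact le_antisymm (s.le_max' e.2 he2) ((hb (s.max' hne) (s.max'_mem hne)).2) |>.symm ▸ rfl

lemma hull_card {s : Finset ℕ} (hs3 : 3 ≤ s.card) :
    ((s ×ˢ s).filter (fun e => Hull s e)).card = s.card := by
  classical
  have hne : s.Nonempty := card_pos.1 (by omega)
  set m := s.min' hne with hmdef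
  set M := s.max' hne with hMdef
  have hm : m ∈ s := s.min'_mem hne
  have hM : M ∈ s := s.max'_mem hne
  have hmM : m < M := s.min'_lt_max'_of_card (by omega)
  -- a middle vertex
  have hmid : ∃ z ∈ s, m < z ∧ z < M := by
    by_contra hno
    push_neg at hno
    have hsub : s ⊆ {m, M} := by
      intro z hz
      simp only [mem_insert, mem_singleton]
      have h1 := s.min'_le z hz
      have h2 := s.le_max' z hz
      rw [← hmdef] at h1
      rw [← hMdef] at h2
      rcases eq_or_lt_of_le h1 with h | h
      · left; omega
      · right; have := hno z hz h; omega
    have h5 := card_le_card hsub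
    have h6 : ({m, M} : Finset ℕ).card ≤ 2 := (card_insert_le _ _).trans (by simp)
    omega
  obtain ⟨z0, hz0, hz0m, hz0M⟩ := hmid
  have hsplit : (s ×ˢ s).filter (fun e => Hull s e) =
      insert (m, M) ((s ×ˢ s).filter (fun e => Consec s e)) := by
    ext e
    rw [mem_filter, mem_insert, mem_filter]
    constructor
    · rintro ⟨hp, hc | hb⟩
      · exact Or.inr ⟨hp, hc⟩
      · exact Or.inl (bnds_eq hne hb)
    · rintro (rfl | ⟨hp, hc⟩)
      · refine ⟨mem_product.2 ⟨hm, hM⟩, Or.inr ⟨⟨hm, hM, hmM⟩, ?_⟩⟩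
        intro z hz
        exact ⟨s.min'_le z hz, s.le_max' z hz⟩
      · exact ⟨hp, Or.inl hc⟩
  rw [hsplit, card_insert_of_notMem]
  · have := consec_card hne
    omega
  · rw [mem_filter]
    rintro ⟨-, ⟨-, hcon⟩⟩
    exact hcon z0 hz0 ⟨hz0m, hz0M⟩

end CC


section Bridge

variable {n : ℕ}

noncomputable def ccf (ord : Fin n → ℕ) : Sym2 (Fin n) → ℕ × ℕ :=
  Sym2.lift ⟨fun u v => (min (ord u) (ord v), max (ord u) (ord v)),
    fun a b => by simp [min_comm, max_comm]⟩

lemma ccf_mk (ord : Fin n → ℕ) (u v : Fin n) :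
    ccf ord s(u, v) = (min (ord u) (ord v), max (ord u) (ord v)) := by
  simp [ccf]

lemma ccf_eq {ord : Fin n → ℕ} {u v : Fin n} (h : ord u < ord v) :
    ccf ord s(u, v) = (ord u, ord v) := by
  rw [ccf_mk]
  simp [min_eq_left h.le, max_eq_right h.le]

lemma rep_exists {ord : Fin n → ℕ} (hinj : Function.Injective ord) {e : Sym2 (Fin n)}
    (hd : ¬ e.IsDiag) : ∃ u v : Fin n, e = s(u, v) ∧ ord u < ord v := by
  induction e using Sym2.ind with
  | _ x y =>
    rw [Sym2.mk_isDiag_iff] at hd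
    have hne : ord x ≠ ord y := fun h => hd (hinj h)
    rcases hne.lt_or_gt with h | h
    · exact ⟨x, y, rfl, h⟩
    · exact ⟨y, x, Sym2.eq_swap, h⟩

lemma edgeCross_symm {V : Type} {p : V → Pt} {e f : Sym2 V} (h : EdgeCross p e f) :
    EdgeCross p f e := by
  obtain ⟨u, v, a, b, he, hf, sc⟩ := h
  exact ⟨a, b, u, v, hf, he, segcross_comm sc⟩

lemma edgeCross_elim {V : Type} {p : V → Pt} {u v a b : V}
    (h : EdgeCross p s(u, v) s(a, b)) : SegCross (p u) (p v) (p a) (p b) := by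
  obtain ⟨u', v', a', b', he, hf, sc⟩ := h
  rw [Sym2.eq_iff] at he hf
  rcases he with ⟨rfl, rfl⟩ | ⟨rfl, rfl⟩ <;> rcases hf with ⟨rfl, rfl⟩ | ⟨rfl, rfl⟩
  · exact sc
  · exact segcross_swap_right sc
  · exact segcross_swap_left sc
  · exact segcross_swap_left (segcross_swap_right sc)

lemma segcross_conv {p : Fin n → Pt} {ord : Fin n → ℕ}
    (hcvx : ∀ i j k : Fin n, ord i < ord j → ord j < ord k → 0 < det2 (p i) (p j) (p k))
    {u v a b : Fin n} (h1 : ord u < ord a) (h2 : ord a < ord v) (h3 : ord v < ord b) :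
    SegCross (p u) (p v) (p a) (p b) := by
  apply segcross_of_det
  · have d1 : 0 < det2 (p u) (p a) (p b) := hcvx u a b h1 (lt_trans h2 h3)
    have d2 : 0 < det2 (p a) (p v) (p b) := hcvx a v b h2 h3
    have e1 : det2 (p u) (p a) (p b) = det2 (p a) (p b) (p u) := det2_cyc _ _ _
    have e2 : det2 (p a) (p b) (p v) = - det2 (p a) (p v) (p b) := det2_swap23 _ _ _
    nlinarith
  · have d1 : 0 < det2 (p u) (p a) (p v) := hcvx u a v h1 h2
    have d2 : 0 < det2 (p u) (p v) (p b) := hcvx u v b (lt_trans h1 h2) h3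
    have e1 : det2 (p u) (p v) (p a) = - det2 (p u) (p a) (p v) := det2_swap23 _ _ _
    nlinarith

lemma cross_to_edgecross {p : Fin n → Pt} {ord : Fin n → ℕ}
    (hinj : Function.Injective ord)
    (hcvx : ∀ i j k : Fin n, ord i < ord j → ord j < ord k → 0 < det2 (p i) (p j) (p k))
    {e f : Sym2 (Fin n)} (hde : ¬ e.IsDiag) (hdf : ¬ f.IsDiag)
    (hcr : CC.Cross (ccf ord e) (ccf ord f)) : EdgeCross p e f := by
  obtain ⟨u, v, he, huv⟩ := rep_exists hinj hde
  obtain ⟨a, b, hf, hab⟩ := rep_exists hinj hdf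
  subst he; subst hf
  rw [ccf_eq huv, ccf_eq hab, CC.cross_def] at hcr
  rcases hcr with ⟨h1, h2, h3⟩ | ⟨h1, h2, h3⟩
  · exact ⟨u, v, a, b, rfl, rfl, segcross_conv hcvx h1 h2 h3⟩
  · exact ⟨u, v, a, b, rfl, rfl, segcross_comm (segcross_conv hcvx h1 h2 h3)⟩

lemma edgecross_to_cross {p : Fin n → Pt} {ord : Fin n → ℕ} (hgen : GenPos p)
    (hinj : Function.Injective ord)
    (hcvx : ∀ i j k : Fin n, ord i < ord j → ord j < ord k → 0 < det2 (p i) (p j) (p k))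
    {e f : Sym2 (Fin n)} (hde : ¬ e.IsDiag) (hdf : ¬ f.IsDiag) (hef : e ≠ f)
    (hec : EdgeCross p e f) : CC.Cross (ccf ord e) (ccf ord f) := by
  obtain ⟨hpinj, hcol⟩ := hgen
  obtain ⟨u, v, he, huv⟩ := rep_exists hinj hde
  obtain ⟨a, b, hf, hab⟩ := rep_exists hinj hdf
  subst he; subst hf
  have sc := edgeCross_elim hec
  have huv' : u ≠ v := fun h => absurd (congrArg ord h) (ne_of_lt huv)
  have hab' : a ≠ b := fun h => absurd (congrArg ord h) (ne_of_lt hab)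
  have hef1 : ¬ (u = a ∧ v = b) := by
    rintro ⟨rfl, rfl⟩; exact hef rfl
  have hef2 : ¬ (u = b ∧ v = a) := by
    rintro ⟨rfl, rfl⟩; exact hef Sym2.eq_swap
  by_cases hua : u = a
  · subst hua
    have hvb : v ≠ b := fun h => hef1 ⟨rfl, h⟩
    exact absurd sc (not_segcross_shared (hcol u v b huv' hab' hvb))
  by_cases hub : u = b
  · subst hub
    have hav : a ≠ v := fun h => hef2 ⟨rfl, h.symm⟩
    exact absurd (segcross_swap_left (segcross_comm sc))
      (not_segcross_shared (hcol u a v hua huv' hav))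
  by_cases hva : v = a
  · subst hva
    have hvb : v ≠ b := fun h => absurd (congrArg ord h) (ne_of_lt hab)
    exact absurd (segcross_swap_left sc)
      (not_segcross_shared (hcol v u b (Ne.symm huv') hvb hub))
  by_cases hvb : v = b
  · subst hvb
    exact absurd (segcross_swap_left (segcross_swap_right (segcross_comm sc)))
      (not_segcross_shared (hcol v a u (fun h => hva h) (Ne.symm huv') (fun h => hua h.symm)))
  -- all four vertices distinct
  have hdne : ∀ i j k : Fin n, i ≠ j → i ≠ k → j ≠ k → det2 (p i) (p j) (p k) ≠ 0 :=
    fun i j k hij hik hjk h =>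
      hcol i j k hij hik hjk (collinear_of_det2 (fun hh => hij (hpinj hh)) h)
  obtain ⟨hp1, hp2⟩ := det_neg_of_segcross sc
    (hdne a b u hab' (fun h => hua h.symm) (fun h => hub h.symm))
    (hdne a b v hab' (fun h => hva h.symm) (fun h => hvb h.symm))
    (hdne u v a huv' hua hva)
    (hdne u v b huv' hub hvb)
  rw [ccf_eq huv, ccf_eq hab, CC.cross_def]
  by_contra hncr
  have do1 : ord u ≠ ord a := fun h => hua (hinj h)
  have do2 : ord u ≠ ord b := fun h => hub (hinj h)
  have do3 : ord v ≠ ord a := fun h => hva (hinj h)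
  have do4 : ord v ≠ ord b := fun h => hvb (hinj h)
  have hpat : ord v < ord a ∨ ord b < ord u ∨ (ord u < ord a ∧ ord b < ord v) ∨
      (ord a < ord u ∧ ord v < ord b) := by omega
  rcases hpat with hA | hB | hC | hD
  · have d1 := hcvx u v a huv hA
    have d2 := hcvx u v b huv (lt_trans hA hab)
    nlinarith
  · have d1 := hcvx a b u hab hB
    have d2 := hcvx a b v hab (lt_trans hB huv)
    nlinarith
  · have d1 := hcvx u a v hC.1 (lt_trans hab hC.2)
    have d2 := hcvx u b v (lt_trans hC.1 hab) hC.2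
    have e1 := det2_swap23 (p u) (p a) (p v)
    have e2 := det2_swap23 (p u) (p b) (p v)
    nlinarith
  · have d1 := hcvx a u b hD.1 (lt_trans huv hD.2)
    have d2 := hcvx a v b (lt_trans hD.1 huv) hD.2
    have e1 := det2_swap23 (p a) (p u) (p b)
    have e2 := det2_swap23 (p a) (p v) (p b)
    nlinarith

end Bridge

/-- Every saturated convex Θ^2-drawing of a graph on `n ≥ 3`
vertices has exactly `3n - 6` edges. -/
theorem stmt5 (n : ℕ) (hn : 3 ≤ n)
    (G : SimpleGraph (Fin n)) (p : Fin n → Pt)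
    (hgen : GenPos p) (hconv : ConvexPos p)
    (hθ : ∃ φ : Sym2 (Fin n) → Fin 2, CrossingFree G p φ)
    (hsat : Saturated 2 G p) :
    (G.edgeSet.ncard : ℤ) = 3 * (n : ℤ) - 6 := by
  classical
  obtain ⟨φ0, hφ0⟩ := hθ
  obtain ⟨ord, hinj, hcvx⟩ := exists_convex_order p hgen hconv (by omega)
  obtain ⟨hpinj, hcol⟩ := hgen
  set s : Finset ℕ := Finset.univ.image ord with hsdef
  have hscard : s.card = n := by
    rw [hsdef, Finset.card_image_of_injective _ hinj, Finset.card_univ, Fintype.card_fin]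
  have hs3 : 3 ≤ s.card := by omega
  have hnd : ∀ e ∈ G.edgeSet, ¬ e.IsDiag := fun e he => G.not_isDiag_of_mem_edgeSet he
  have hndmk : ∀ u v : Fin n, u ≠ v → ¬ (s(u, v) : Sym2 (Fin n)).IsDiag := by
    intro u v h hd
    rw [Sym2.mk_isDiag_iff] at hd
    exact h hd
  have hchord : ∀ (e : Sym2 (Fin n)), ¬ e.IsDiag → CC.Chord s (ccf ord e) := by
    intro e hde
    obtain ⟨u, v, rfl, huv⟩ := rep_exists hinj hde
    rw [ccf_eq huv]
    exact ⟨Finset.mem_image_of_mem ord (Finset.mem_univ u),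
      Finset.mem_image_of_mem ord (Finset.mem_univ v), huv⟩
  have hccinj : ∀ e f : Sym2 (Fin n), ¬e.IsDiag → ¬f.IsDiag →
      ccf ord e = ccf ord f → e = f := by
    intro e f hde hdf h
    obtain ⟨u, v, rfl, huv⟩ := rep_exists hinj hde
    obtain ⟨a, b, rfl, hab⟩ := rep_exists hinj hdf
    rw [ccf_eq huv, ccf_eq hab, Prod.mk.injEq] at h
    rw [hinj h.1, hinj h.2]
  have hhullnc : ∀ e f : Sym2 (Fin n), ¬e.IsDiag → ¬f.IsDiag → e ≠ f →
      CC.Hull s (ccf ord e) → ¬ EdgeCross p e f ∧ ¬ EdgeCross p f e := by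
    intro e f hde hdf hef hH
    constructor
    · intro hec
      exact CC.hull_not_crossed hH (hchord f hdf)
        (edgecross_to_cross ⟨hpinj, hcol⟩ hinj hcvx hde hdf hef hec)
    · intro hec
      exact CC.hull_not_crossed hH (hchord f hdf)
        (CC.cross_symm (edgecross_to_cross ⟨hpinj, hcol⟩ hinj hcvx hdf hde (Ne.symm hef) hec))
  have hsup : ∀ (w g : Sym2 (Fin n)),
      g ∈ (G ⊔ SimpleGraph.fromEdgeSet {w}).edgeSet → g ∈ G.edgeSet ∨ g = w := by
    intro w g hg
    rw [SimpleGraph.edgeSet_sup] at hg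
    rcases hg with h | h
    · exact Or.inl h
    · rw [SimpleGraph.edgeSet_fromEdgeSet] at h
      exact Or.inr h.1
  -- Step 1 : hull chords are edges of G
  have hhull_edge : ∀ u v : Fin n, u ≠ v → CC.Hull s (ccf ord s(u, v)) → G.Adj u v := by
    intro u v hne hH
    by_contra hnadj
    apply hsat u v hne hnadj (fun g => if g = s(u, v) then 0 else φ0 g)
    intro e he f hf hef hcolor
    simp only at hcolor
    have hsuv : (s(u, v) : Sym2 (Fin n)) ∉ G.edgeSet :=
      fun h => hnadj ((G.mem_edgeSet).1 h)
    rcases hsup _ e he with heG | rfl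
    · rcases hsup _ f hf with hfG | rfl
      · have h1 : e ≠ s(u, v) := fun h => hsuv (h ▸ heG)
        have h2 : f ≠ s(u, v) := fun h => hsuv (h ▸ hfG)
        rw [if_neg h1, if_neg h2] at hcolor
        exact hφ0 e heG f hfG hef hcolor
      · have h1 : e ≠ s(u, v) := fun h => hsuv (h ▸ heG)
        exact (hhullnc s(u, v) e (hndmk u v hne) (hnd e heG) (Ne.symm h1) hH).2
    · rcases hsup _ f hf with hfG | rfl
      · have h2 : f ≠ s(u, v) := fun h => hsuv (h ▸ hfG)
        exact (hhullnc s(u, v) f (hndmk u v hne) (hnd f hfG) (Ne.symm h2) hH).1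
      · exact absurd rfl hef
  -- choose a crossing-free coloring maximizing the first color class of diagonals
  set E : Finset (Sym2 (Fin n)) := Finset.univ.filter (fun e => e ∈ G.edgeSet) with hEdef
  have hEmem : ∀ e, e ∈ E ↔ e ∈ G.edgeSet := by
    intro e; rw [hEdef, Finset.mem_filter]; simp
  set CF : Finset (Sym2 (Fin n) → Fin 2) :=
    Finset.univ.filter (fun ψ => CrossingFree G p ψ) with hCFdef
  obtain ⟨φ, hφCF, hφmax⟩ := Finset.exists_max_image CF
    (fun ψ => (E.filter (fun e => CC.Diag s (ccf ord e) ∧ ψ e = 0)).card)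
    ⟨φ0, by rw [hCFdef, Finset.mem_filter]; exact ⟨Finset.mem_univ _, hφ0⟩⟩
  have hφ : CrossingFree G p φ := by
    rw [hCFdef, Finset.mem_filter] at hφCF; exact hφCF.2
  set F1 : Finset (Sym2 (Fin n)) :=
    E.filter (fun e => CC.Diag s (ccf ord e) ∧ φ e = 0) with hF1def
  set F2 : Finset (Sym2 (Fin n)) :=
    E.filter (fun e => CC.Diag s (ccf ord e) ∧ φ e = 1) with hF2def
  set D1 := F1.image (ccf ord) with hD1def
  set D2 := F2.image (ccf ord) with hD2def
  have hfin2 : ∀ c : Fin 2, c = 0 ∨ c = 1 := by decide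
  have hndE : ∀ e ∈ E, ¬ e.IsDiag := fun e he => hnd e ((hEmem e).1 he)
  have hD1diag : ∀ d ∈ D1, CC.Diag s d := by
    intro d hd
    obtain ⟨e, he, rfl⟩ := Finset.mem_image.1 hd
    rw [hF1def, Finset.mem_filter] at he
    exact he.2.1
  have hD2diag : ∀ d ∈ D2, CC.Diag s d := by
    intro d hd
    obtain ⟨e, he, rfl⟩ := Finset.mem_image.1 hd
    rw [hF2def, Finset.mem_filter] at he
    exact he.2.1
  have hD1nc : ∀ d ∈ D1, ∀ d' ∈ D1, ¬ CC.Cross d d' := by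
    intro d hd d' hd'
    obtain ⟨e, he, rfl⟩ := Finset.mem_image.1 hd
    obtain ⟨f, hf, rfl⟩ := Finset.mem_image.1 hd'
    rw [hF1def, Finset.mem_filter] at he hf
    by_cases hef : e = f
    · subst hef; exact CC.cross_irrefl _
    · intro hcr
      exact hφ e ((hEmem e).1 he.1) f ((hEmem f).1 hf.1) hef
        (he.2.2.trans hf.2.2.symm)
        (cross_to_edgecross hinj hcvx (hndE e he.1) (hndE f hf.1) hcr)
  have hD2nc : ∀ d ∈ D2, ∀ d' ∈ D2, ¬ CC.Cross d d' := by
    intro d hd d' hd'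
    obtain ⟨e, he, rfl⟩ := Finset.mem_image.1 hd
    obtain ⟨f, hf, rfl⟩ := Finset.mem_image.1 hd'
    rw [hF2def, Finset.mem_filter] at he hf
    by_cases hef : e = f
    · subst hef; exact CC.cross_irrefl _
    · intro hcr
      exact hφ e ((hEmem e).1 he.1) f ((hEmem f).1 hf.1) hef
        (he.2.2.trans hf.2.2.symm)
        (cross_to_edgecross hinj hcvx (hndE e he.1) (hndE f hf.1) hcr)
  -- saturation helper : a missing diagonal compatible with a color class is impossible
  have hadd : ∀ (c : Fin 2) (Dc : Finset (ℕ × ℕ)),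
      (∀ f ∈ E, CC.Diag s (ccf ord f) → φ f = c → ccf ord f ∈ Dc) →
      ∀ u v : Fin n, u ≠ v → ¬ G.Adj u v → CC.Diag s (ccf ord s(u, v)) →
      (∀ d ∈ Dc, ¬ CC.Cross (ccf ord s(u, v)) d) → False := by
    intro c Dc hDc u v hne hnadj hdg hcompat
    apply hsat u v hne hnadj (fun g => if g = s(u, v) then c else φ g)
    intro e he f hf hef hcolor
    simp only at hcolor
    have hsuv : (s(u, v) : Sym2 (Fin n)) ∉ G.edgeSet :=
      fun h => hnadj ((G.mem_edgeSet).1 h)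
    have hgen2 : ∀ g : Sym2 (Fin n), g ∈ G.edgeSet → φ g = c →
        ¬ EdgeCross p s(u, v) g ∧ ¬ EdgeCross p g s(u, v) := by
      intro g hg hcg
      have hgne : g ≠ s(u, v) := fun h => hsuv (h ▸ hg)
      by_cases hHg : CC.Hull s (ccf ord g)
      · exact ⟨(hhullnc g s(u, v) (hnd g hg) (hndmk u v hne) hgne hHg).2,
               (hhullnc g s(u, v) (hnd g hg) (hndmk u v hne) hgne hHg).1⟩
      · have h1 : ¬ CC.Cross (ccf ord s(u, v)) (ccf ord g) :=
          hcompat _ (hDc g ((hEmem g).2 hg) ⟨hchord g (hnd g hg), hHg⟩ hcg)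
        constructor
        · intro hec
          exact h1 (edgecross_to_cross ⟨hpinj, hcol⟩ hinj hcvx (hndmk u v hne) (hnd g hg)
            (Ne.symm hgne) hec)
        · intro hec
          exact h1 (CC.cross_symm (edgecross_to_cross ⟨hpinj, hcol⟩ hinj hcvx (hnd g hg)
            (hndmk u v hne) hgne hec))
    rcases hsup _ e he with heG | rfl
    · rcases hsup _ f hf with hfG | rfl
      · have h1 : e ≠ s(u, v) := fun h => hsuv (h ▸ heG)
        have h2 : f ≠ s(u, v) := fun h => hsuv (h ▸ hfG)
        rw [if_neg h1, if_neg h2] at hcolor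
        exact hφ e heG f hfG hef hcolor
      · have h1 : e ≠ s(u, v) := fun h => hsuv (h ▸ heG)
        rw [if_neg h1, if_pos rfl] at hcolor
        exact (hgen2 e heG hcolor).2
    · rcases hsup _ f hf with hfG | rfl
      · have h2 : f ≠ s(u, v) := fun h => hsuv (h ▸ hfG)
        rw [if_pos rfl, if_neg h2] at hcolor
        exact (hgen2 f hfG hcolor.symm).1
      · exact absurd rfl hef
  -- D1 is a maximal family
  have hmaxD1 : CC.MaxFam s D1 := by
    refine ⟨hD1diag, hD1nc, ?_⟩
    intro d hd hcompat
    by_contra hnotin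
    obtain ⟨hd1s, hd2s, hd12⟩ := hd.1
    obtain ⟨u, -, hu⟩ := Finset.mem_image.1 hd1s
    obtain ⟨v, -, hv⟩ := Finset.mem_image.1 hd2s
    have huv : ord u < ord v := by rw [hu, hv]; exact hd12
    have hne : u ≠ v := fun h => absurd (congrArg ord h) (ne_of_lt huv)
    have hccd : ccf ord s(u, v) = d := by rw [ccf_eq huv]; exact Prod.ext hu hv
    by_cases hadj : G.Adj u v
    · have hsuvE : s(u, v) ∈ E := (hEmem _).2 ((G.mem_edgeSet).2 hadj)
      have hφsuv : φ s(u, v) = 1 := by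
        rcases hfin2 (φ s(u, v)) with h0 | h1
        · exact absurd (Finset.mem_image.2 ⟨s(u, v),
            by rw [hF1def, Finset.mem_filter]; exact ⟨hsuvE, by rw [hccd]; exact hd, h0⟩,
            hccd⟩) hnotin
        · exact h1
      have hψcf : CrossingFree G p (fun g => if g = s(u, v) then 0 else φ g) := by
        intro e he f hf hef hcolor
        simp only at hcolor
        have key : ∀ g ∈ G.edgeSet, g ≠ s(u, v) → φ g = 0 →
            ¬ EdgeCross p s(u, v) g ∧ ¬ EdgeCross p g s(u, v) := by
          intro g hg hgne h0
          by_cases hHg : CC.Hull s (ccf ord g)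
          · exact ⟨(hhullnc g s(u, v) (hnd g hg) (hndmk u v hne) hgne hHg).2,
                   (hhullnc g s(u, v) (hnd g hg) (hndmk u v hne) hgne hHg).1⟩
          · have hgD1 : ccf ord g ∈ D1 := Finset.mem_image.2 ⟨g,
              by rw [hF1def, Finset.mem_filter];
                 exact ⟨(hEmem g).2 hg, ⟨hchord g (hnd g hg), hHg⟩, h0⟩, rfl⟩
            have h1 : ¬ CC.Cross (ccf ord s(u, v)) (ccf ord g) := by
              rw [hccd]; exact hcompat _ hgD1
            constructor
            · intro hec
              exact h1 (edgecross_to_cross ⟨hpinj, hcol⟩ hinj hcvx (hndmk u v hne)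
                (hnd g hg) (Ne.symm hgne) hec)
            · intro hec
              exact h1 (CC.cross_symm (edgecross_to_cross ⟨hpinj, hcol⟩ hinj hcvx
                (hnd g hg) (hndmk u v hne) hgne hec))
        by_cases he' : e = s(u, v) <;> by_cases hf' : f = s(u, v)
        · exact absurd (he'.trans hf'.symm) hef
        · subst he'
          rw [if_pos rfl, if_neg hf'] at hcolor
          exact (key f hf hf' hcolor.symm).1
        · subst hf'
          rw [if_neg he', if_pos rfl] at hcolor
          exact (key e he he' hcolor).2
        · rw [if_neg he', if_neg hf'] at hcolor
          exact hφ e he f hf hef hcolor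
      have hψCF : (fun g => if g = s(u, v) then (0 : Fin 2) else φ g) ∈ CF := by
        rw [hCFdef, Finset.mem_filter]; exact ⟨Finset.mem_univ _, hψcf⟩
      have hmono : (E.filter (fun e => CC.Diag s (ccf ord e) ∧
          (if e = s(u, v) then (0 : Fin 2) else φ e) = 0)).card ≤ F1.card :=
        hφmax _ hψCF
      have hmemF1 : ∀ g : Sym2 (Fin n), g ∈ F1 ↔
          (g ∈ E ∧ CC.Diag s (ccf ord g) ∧ φ g = 0) := by
        intro g; rw [hF1def, Finset.mem_filter]
      have hsplit : E.filter (fun e => CC.Diag s (ccf ord e) ∧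
          (if e = s(u, v) then (0 : Fin 2) else φ e) = 0) = insert s(u, v) F1 := by
        ext g
        simp only [Finset.mem_filter, Finset.mem_insert]
        rw [hmemF1 g]
        by_cases hg : g = s(u, v)
        · rw [if_pos hg]
          constructor
          · intro _; exact Or.inl hg
          · intro _
            subst hg
            exact ⟨hsuvE, by rw [hccd]; exact hd, rfl⟩
        · rw [if_neg hg]
          constructor
          · rintro ⟨a1, a2, a3⟩; exact Or.inr ⟨a1, a2, a3⟩
          · rintro (h | ⟨a1, a2, a3⟩)
            · exact absurd h hg
            · exact ⟨a1, a2, a3⟩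
      have hnotF1 : s(u, v) ∉ F1 := by
        rw [hF1def, Finset.mem_filter]
        rintro ⟨-, -, h0⟩
        rw [hφsuv] at h0
        exact absurd h0 (by decide)
      rw [hsplit, Finset.card_insert_of_notMem hnotF1] at hmono
      omega
    · refine hadd 0 D1 ?_ u v hne hadj (by rw [hccd]; exact hd) ?_
      · intro f hf hdf h0
        exact Finset.mem_image.2 ⟨f, by rw [hF1def, Finset.mem_filter]; exact ⟨hf, hdf, h0⟩, rfl⟩
      · intro dd hdd
        rw [hccd]
        exact hcompat dd hdd
  have hD1count : D1.card + 3 = n := by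
    have := CC.count_aux s.card s D1 le_rfl hs3 hmaxD1
    omega
  -- D2 has full size as well
  have hD2count : D2.card + 3 = s.card := by
    rcases eq_or_lt_of_le (CC.family_card_le hs3 hD2diag hD2nc) with h | hlt
    · exact h
    exfalso
    obtain ⟨gc, hgcdiag, hgcnot, hgccompat⟩ := CC.nonmax_addable hs3 hD2diag hD2nc hlt
    obtain ⟨hg1s, hg2s, hg12⟩ := hgcdiag.1
    obtain ⟨u, -, hu⟩ := Finset.mem_image.1 hg1s
    obtain ⟨v, -, hv⟩ := Finset.mem_image.1 hg2s
    have huv : ord u < ord v := by rw [hu, hv]; exact hg12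
    have hne : u ≠ v := fun h => absurd (congrArg ord h) (ne_of_lt huv)
    have hccg : ccf ord s(u, v) = gc := by rw [ccf_eq huv]; exact Prod.ext hu hv
    by_cases hadj : G.Adj u v
    · have hsuvE : s(u, v) ∈ E := (hEmem _).2 ((G.mem_edgeSet).2 hadj)
      have hφsuv : φ s(u, v) = 0 := by
        rcases hfin2 (φ s(u, v)) with h0 | h1
        · exact h0
        · exact absurd (Finset.mem_image.2 ⟨s(u, v),
            by rw [hF2def, Finset.mem_filter]; exact ⟨hsuvE, by rw [hccg]; exact hgcdiag, h1⟩,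
            hccg⟩) hgcnot
      have hgD1 : gc ∈ D1 := Finset.mem_image.2 ⟨s(u, v),
        by rw [hF1def, Finset.mem_filter]; exact ⟨hsuvE, by rw [hccg]; exact hgcdiag, hφsuv⟩,
        hccg⟩
      obtain ⟨dd, hdddiag, hddcross, hddcompat⟩ := CC.flip hmaxD1 (x := gc.1) (y := gc.2) hgD1
      have hddcross' : CC.Cross gc dd := hddcross
      have hddnotD1 : dd ∉ D1 := fun hmem => hD1nc gc hgD1 dd hmem hddcross'
      have hddnotD2 : dd ∉ D2 := fun hmem => hgccompat dd hmem hddcross'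
      obtain ⟨hdd1s, hdd2s, hdd12⟩ := hdddiag.1
      obtain ⟨a, -, ha⟩ := Finset.mem_image.1 hdd1s
      obtain ⟨b, -, hb⟩ := Finset.mem_image.1 hdd2s
      have habo : ord a < ord b := by rw [ha, hb]; exact hdd12
      have hneab : a ≠ b := fun h => absurd (congrArg ord h) (ne_of_lt habo)
      have hccdd : ccf ord s(a, b) = dd := by rw [ccf_eq habo]; exact Prod.ext ha hb
      have hsabnot : (s(a, b) : Sym2 (Fin n)) ∉ G.edgeSet := by
        intro hmem
        have hsabE : s(a, b) ∈ E := (hEmem _).2 hmem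
        rcases hfin2 (φ s(a, b)) with h0 | h1
        · exact hddnotD1 (Finset.mem_image.2 ⟨s(a, b),
            by rw [hF1def, Finset.mem_filter]; exact ⟨hsabE, by rw [hccdd]; exact hdddiag, h0⟩,
            hccdd⟩)
        · exact hddnotD2 (Finset.mem_image.2 ⟨s(a, b),
            by rw [hF2def, Finset.mem_filter]; exact ⟨hsabE, by rw [hccdd]; exact hdddiag, h1⟩,
            hccdd⟩)
      have hnadjab : ¬ G.Adj a b := fun h => hsabnot ((G.mem_edgeSet).2 h)
      apply hsat a b hneab hnadjab
        (fun gg => if gg = s(a, b) then 0 else if gg = s(u, v) then 1 else φ gg)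
      intro e he f hf hef hcolor
      simp only at hcolor
      have hsuvG : (s(u, v) : Sym2 (Fin n)) ∈ G.edgeSet := (G.mem_edgeSet).2 hadj
      -- K1 : old 0-colored edges other than s(u,v) do not cross s(a,b)
      have K1 : ∀ g ∈ G.edgeSet, g ≠ s(u, v) → φ g = 0 →
          ¬ EdgeCross p s(a, b) g ∧ ¬ EdgeCross p g s(a, b) := by
        intro g hg hgne h0
        have hggne : g ≠ s(a, b) := fun h => hsabnot (h ▸ hg)
        by_cases hHg : CC.Hull s (ccf ord g)
        · exact ⟨(hhullnc g s(a, b) (hnd g hg) (hndmk a b hneab) hggne hHg).2,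
                 (hhullnc g s(a, b) (hnd g hg) (hndmk a b hneab) hggne hHg).1⟩
        · have hgD1' : ccf ord g ∈ D1 := Finset.mem_image.2 ⟨g,
            by rw [hF1def, Finset.mem_filter];
               exact ⟨(hEmem g).2 hg, ⟨hchord g (hnd g hg), hHg⟩, h0⟩, rfl⟩
          have hgnegc : ccf ord g ≠ gc := by
            intro h
            exact hgne (hccinj g s(u, v) (hnd g hg) (hndmk u v hne) (h.trans hccg.symm))
          have h1 : ¬ CC.Cross dd (ccf ord g) := hddcompat _ hgD1' hgnegc
          constructor
          · intro hec
            apply h1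
            have := edgecross_to_cross ⟨hpinj, hcol⟩ hinj hcvx (hndmk a b hneab)
              (hnd g hg) (Ne.symm hggne) hec
            rwa [hccdd] at this
          · intro hec
            apply h1
            have := edgecross_to_cross ⟨hpinj, hcol⟩ hinj hcvx (hnd g hg)
              (hndmk a b hneab) hggne hec
            rw [hccdd] at this
            exact CC.cross_symm this
      -- K2 : old 1-colored edges do not cross s(u,v)
      have K2 : ∀ g ∈ G.edgeSet, g ≠ s(u, v) → φ g = 1 →
          ¬ EdgeCross p s(u, v) g ∧ ¬ EdgeCross p g s(u, v) := by
        intro g hg hgne h1'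
        by_cases hHg : CC.Hull s (ccf ord g)
        · exact ⟨(hhullnc g s(u, v) (hnd g hg) (hndmk u v hne) hgne hHg).2,
                 (hhullnc g s(u, v) (hnd g hg) (hndmk u v hne) hgne hHg).1⟩
        · have hgD2' : ccf ord g ∈ D2 := Finset.mem_image.2 ⟨g,
            by rw [hF2def, Finset.mem_filter];
               exact ⟨(hEmem g).2 hg, ⟨hchord g (hnd g hg), hHg⟩, h1'⟩, rfl⟩
          have h1 : ¬ CC.Cross (ccf ord s(u, v)) (ccf ord g) := by
            rw [hccg]; exact hgccompat _ hgD2'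
          constructor
          · intro hec
            exact h1 (edgecross_to_cross ⟨hpinj, hcol⟩ hinj hcvx (hndmk u v hne)
              (hnd g hg) (Ne.symm hgne) hec)
          · intro hec
            exact h1 (CC.cross_symm (edgecross_to_cross ⟨hpinj, hcol⟩ hinj hcvx
              (hnd g hg) (hndmk u v hne) hgne hec))
      rcases hsup _ e he with heG | rfl
      · rcases hsup _ f hf with hfG | rfl
        · have h1 : e ≠ s(a, b) := fun h => hsabnot (h ▸ heG)
          have h2 : f ≠ s(a, b) := fun h => hsabnot (h ▸ hfG)
          rw [if_neg h1, if_neg h2] at hcolor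
          by_cases he' : e = s(u, v) <;> by_cases hf' : f = s(u, v)
          · exact absurd (he'.trans hf'.symm) hef
          · subst he'
            rw [if_pos rfl, if_neg hf'] at hcolor
            exact (K2 f hfG hf' hcolor.symm).1
          · subst hf'
            rw [if_neg he', if_pos rfl] at hcolor
            exact (K2 e heG he' hcolor).2
          · rw [if_neg he', if_neg hf'] at hcolor
            exact hφ e heG f hfG hef hcolor
        · have h1 : e ≠ s(a, b) := fun h => hsabnot (h ▸ heG)
          rw [if_neg h1, if_pos rfl] at hcolor
          by_cases he' : e = s(u, v)
          · subst he'
            rw [if_pos rfl] at hcolor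
            exact absurd hcolor (by decide)
          · rw [if_neg he'] at hcolor
            exact (K1 e heG he' hcolor).2
      · rcases hsup _ f hf with hfG | rfl
        · have h2 : f ≠ s(a, b) := fun h => hsabnot (h ▸ hfG)
          rw [if_pos rfl, if_neg h2] at hcolor
          by_cases hf' : f = s(u, v)
          · subst hf'
            rw [if_pos rfl] at hcolor
            exact absurd hcolor (by decide)
          · rw [if_neg hf'] at hcolor
            exact (K1 f hfG hf' hcolor.symm).1
        · exact absurd rfl hef
    · refine hadd 1 D2 ?_ u v hne hadj (by rw [hccg]; exact hgcdiag) ?_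
      · intro f hf hdf h1
        exact Finset.mem_image.2 ⟨f, by rw [hF2def, Finset.mem_filter]; exact ⟨hf, hdf, h1⟩, rfl⟩
      · intro dd hdd
        rw [hccg]
        exact hgccompat dd hdd
  -- cardinalities
  have hF1card : D1.card = F1.card := by
    rw [hD1def]
    apply Finset.card_image_of_injOn
    intro e he f hf h
    have he' : e ∈ F1 := he
    have hf' : f ∈ F1 := hf
    rw [hF1def, Finset.mem_filter] at he' hf'
    exact hccinj e f (hndE e he'.1) (hndE f hf'.1) h
  have hF2card : D2.card = F2.card := by
    rw [hD2def]
    apply Finset.card_image_of_injOn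
    intro e he f hf h
    have he' : e ∈ F2 := he
    have hf' : f ∈ F2 := hf
    rw [hF2def, Finset.mem_filter] at he' hf'
    exact hccinj e f (hndE e he'.1) (hndE f hf'.1) h
  have hEhull : (E.filter (fun e => CC.Hull s (ccf ord e))).card = n := by
    have hbij : (E.filter (fun e => CC.Hull s (ccf ord e))).card =
        ((s ×ˢ s).filter (fun e => CC.Hull s e)).card := by
      apply Finset.card_bij (fun e _ => ccf ord e)
      · intro e he
        rw [Finset.mem_filter] at he
        have hc := hchord e (hndE e he.1)
        rw [Finset.mem_filter, Finset.mem_product]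
        exact ⟨⟨hc.1, hc.2.1⟩, he.2⟩
      · intro e he f hf h
        rw [Finset.mem_filter] at he hf
        exact hccinj e f (hndE e he.1) (hndE f hf.1) h
      · intro d hd
        rw [Finset.mem_filter] at hd
        obtain ⟨hdp, hdH⟩ := hd
        have hdch : CC.Chord s d := by rcases hdH with h | h; exacts [h.1, h.1]
        obtain ⟨hd1s, hd2s, hd12⟩ := hdch
        obtain ⟨u, -, hu⟩ := Finset.mem_image.1 hd1s
        obtain ⟨v, -, hv⟩ := Finset.mem_image.1 hd2s
        have huv : ord u < ord v := by rw [hu, hv]; exact hd12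
        have hne : u ≠ v := fun h => absurd (congrArg ord h) (ne_of_lt huv)
        have hccd : ccf ord s(u, v) = d := by rw [ccf_eq huv]; exact Prod.ext hu hv
        have hadj : G.Adj u v := hhull_edge u v hne (by rw [hccd]; exact hdH)
        exact ⟨s(u, v), Finset.mem_filter.2 ⟨(hEmem _).2 ((G.mem_edgeSet).2 hadj),
          by rw [hccd]; exact hdH⟩, hccd⟩
    rw [hbij, CC.hull_card hs3, hscard]
  have hpart1 : (E.filter (fun e => CC.Hull s (ccf ord e))).card +
      (E.filter (fun e => ¬ CC.Hull s (ccf ord e))).card = E.card :=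
    Finset.card_filter_add_card_filter_not _
  have hEd : E.filter (fun e => ¬ CC.Hull s (ccf ord e)) =
      E.filter (fun e => CC.Diag s (ccf ord e)) := by
    apply Finset.filter_congr
    intro e he
    constructor
    · intro h; exact ⟨hchord e (hndE e he), h⟩
    · intro h; exact h.2
  have hpart2 : ((E.filter (fun e => CC.Diag s (ccf ord e))).filter (fun e => φ e = 0)).card +
      ((E.filter (fun e => CC.Diag s (ccf ord e))).filter (fun e => ¬ φ e = 0)).card =
      (E.filter (fun e => CC.Diag s (ccf ord e))).card :=
    Finset.card_filter_add_card_filter_not _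
  have hff1 : (E.filter (fun e => CC.Diag s (ccf ord e))).filter (fun e => φ e = 0) = F1 := by
    rw [Finset.filter_filter, hF1def]
  have hff2 : (E.filter (fun e => CC.Diag s (ccf ord e))).filter (fun e => ¬ φ e = 0) = F2 := by
    rw [Finset.filter_filter, hF2def]
    apply Finset.filter_congr
    intro e he
    constructor
    · rintro ⟨hd, h0⟩
      rcases hfin2 (φ e) with h | h
      · exact absurd h h0
      · exact ⟨hd, h⟩
    · rintro ⟨hd, h1⟩
      refine ⟨hd, ?_⟩
      rw [h1]
      decide
  have hEset : G.edgeSet = ↑E := by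
    ext e
    rw [hEdef]
    simp
  have hncard : G.edgeSet.ncard = E.card := by
    rw [hEset, Set.ncard_coe_finset]
  rw [hEd] at hpart1
  rw [hff1, hff2] at hpart2
  rw [hncard]
  have h6 : E.card + 6 = 3 * n := by omega
  push_cast
  omega
end
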